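/- arXiv:1807.10046 — 8 statements merged into one kernel-verified Lean document; each statement's English description precedes it below -/
import Mathlib

section
/- Let U, V ∈ ℝ^n be vectors with components in non-decreasing order, and let t ∈ ℝ. Then the set S = {σ ∈ S_n : (σU)·V ≥ t} is an upper set in the factorial lattice on S_n; that is, if σ ∈ S and σ ≤ σ' in the factorial lattice, then σ' ∈ S. -/
/-- The covering relation of the factorial lattice on permutations, where a permutation σ is
written as the sequence `(a_1,…,a_n)` with `σ (a i) = i`, i.e. `a i = σ⁻¹ i`. -/
def FactCover {n : ℕ} (σ τ : Equiv.Perm (Fin n)) : Prop :=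
  ∃ i j : Fin n, i < j ∧ σ.symm j < σ.symm i ∧ σ.symm i = τ.symm j ∧ σ.symm j = τ.symm i ∧
    (∀ k : Fin n, k ≠ i → k ≠ j → σ.symm k = τ.symm k) ∧
    (∀ k : Fin n, i < k → k < j → σ.symm i < σ.symm k)

/-- The factorial lattice order: the reflexive transitive closure of `FactCover`. -/
def FactLe {n : ℕ} (σ τ : Equiv.Perm (Fin n)) : Prop :=
  Relation.ReflTransGen FactCover σ τ

/-- For vectors `U, V ∈ ℝ^n` with non-decreasing components and `t ∈ ℝ`, the set
`S = {σ : (σU)·V ≥ t}` is an upper set in the factorial lattice, where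
`(σU) i = U (σ⁻¹ i)`. -/
theorem stmt2 {n : ℕ} (U V : Fin n → ℝ) (hU : Monotone U) (hV : Monotone V) (t : ℝ)
    (σ τ : Equiv.Perm (Fin n)) (hσ : t ≤ ∑ i, U (σ.symm i) * V i) (hle : FactLe σ τ) :
    t ≤ ∑ i, U (τ.symm i) * V i := by
  induction hle with
  | refl => exact hσ
  | tail _ hcov ih =>
    rename_i σ' τ' _
    refine le_trans ih ?_
    obtain ⟨i, j, hij, hlt, hei, hej, hoff, _⟩ := hcov
    have hne : i ≠ j := ne_of_lt hij
    have key : ∀ π : Equiv.Perm (Fin n), ∑ k, U (π.symm k) * V k =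
        (∑ k ∈ (Finset.univ.erase j).erase i, U (π.symm k) * V k)
          + U (π.symm i) * V i + U (π.symm j) * V j := by
      intro π
      rw [Finset.sum_erase_add _ _ (Finset.mem_erase.2 ⟨hne, Finset.mem_univ i⟩),
        Finset.sum_erase_add _ _ (Finset.mem_univ j)]
    rw [key σ', key τ', hei, hej]
    have hrest : ∀ k ∈ (Finset.univ.erase j).erase i,
        U (σ'.symm k) * V k = U (τ'.symm k) * V k := by
      intro k hk
      rw [hoff k (Finset.mem_erase.1 hk).1
        (Finset.mem_erase.1 (Finset.mem_erase.1 hk).2).1]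
    rw [Finset.sum_congr rfl hrest]
    have h2 := mul_add_mul_le_mul_add_mul (hU (le_of_lt hlt)) (hV (le_of_lt hij))
    rw [hei, hej] at h2
    linarith
end

section
/- Let S be an upper set in the product partial order on ∏_{k=1}^n {0,...,k-1}. Then the discrepancy of S — the absolute difference between the number of points of S whose coordinate sum is even and the number whose coordinate sum is odd — is at most n!/n = (n-1)!. -/
lemma range_sum_bound (a b : ℕ) :
    |(∑ k ∈ Finset.range b, (-1:ℤ)^k) - ∑ k ∈ Finset.range a, (-1:ℤ)^k| ≤ 1 := by
  rw [neg_one_geom_sum, neg_one_geom_sum]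
  split <;> split <;> norm_num

lemma chainA (m : ℕ) (P : Fin m → Prop) [DecidablePred P]
    (hmono : ∀ c c' : Fin m, c ≤ c' → P c → P c') :
    |∑ c : Fin m, if P c then (-1:ℤ)^(c:ℕ) else 0| ≤ 1 := by
  by_cases h : (Finset.univ.filter P).Nonempty
  · set t := (Finset.univ.filter P).min' h with ht
    have htP : P t := (Finset.mem_filter.mp ((Finset.univ.filter P).min'_mem h)).2
    have hPiff : ∀ c : Fin m, P c ↔ (t:ℕ) ≤ (c:ℕ) := by
      intro c
      constructor
      · intro hc
        exact Finset.min'_le _ _ (Finset.mem_filter.mpr ⟨Finset.mem_univ _, hc⟩)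
      · intro hc; exact hmono t c hc htP
    have e1 : ∑ c : Fin m, (if P c then (-1:ℤ)^(c:ℕ) else 0)
        = ∑ k ∈ Finset.range m, (if (t:ℕ) ≤ k then (-1:ℤ)^k else 0) := by
      rw [← Fin.sum_univ_eq_sum_range (fun k : ℕ => if (t:ℕ) ≤ k then (-1:ℤ)^k else 0) m]
      exact Finset.sum_congr rfl fun c _ => by simp only [hPiff]
    have e2 : ∑ k ∈ Finset.range m, (if (t:ℕ) ≤ k then (-1:ℤ)^k else 0)
        = ∑ k ∈ Finset.Ico (t:ℕ) m, (-1:ℤ)^k := by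
      rw [← Finset.sum_filter]
      apply Finset.sum_congr _ fun _ _ => rfl
      ext k
      simp [Finset.mem_filter, Finset.mem_Ico, and_comm]
    rw [e1, e2, Finset.sum_Ico_eq_sub _ (le_of_lt t.isLt)]
    exact range_sum_bound _ _
  · rw [Finset.not_nonempty_iff_eq_empty] at h
    have : ∀ c : Fin m, ¬ P c := by
      intro c hc
      have : c ∈ Finset.univ.filter P := Finset.mem_filter.mpr ⟨Finset.mem_univ _, hc⟩
      simp [h] at this
    simp [this]

lemma signed_count {α : Type*} [DecidableEq α] (S : Finset α) (f : α → ℕ) :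
    ∑ x ∈ S, (-1:ℤ)^(f x)
      = ((S.filter fun x => Even (f x)).card : ℤ) - ((S.filter fun x => Odd (f x)).card : ℤ) := by
  rw [← Finset.sum_filter_add_sum_filter_not S (fun x => Even (f x))]
  have h1 : ∑ x ∈ S.filter fun x => Even (f x), (-1:ℤ)^(f x)
      = ((S.filter fun x => Even (f x)).card : ℤ) := by
    rw [Finset.sum_congr rfl fun x hx => (Finset.mem_filter.mp hx).2.neg_one_pow]
    simp
  have h2 : ∑ x ∈ S.filter fun x => ¬ Even (f x), (-1:ℤ)^(f x)
      = -((S.filter fun x => Odd (f x)).card : ℤ) := by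
    have : (S.filter fun x => ¬ Even (f x)) = S.filter fun x => Odd (f x) := by
      apply Finset.filter_congr; intro x _; exact Nat.not_even_iff_odd
    rw [this, Finset.sum_congr rfl fun x hx => (Finset.mem_filter.mp hx).2.neg_one_pow]
    simp
  rw [h1, h2]; ring

lemma fiber_sum {n : ℕ} (i₀ : Fin n) (y : (i : Fin n) → Fin (i.1 + 1)) (hy : y i₀ = 0)
    {M : Type*} [AddCommMonoid M] (F : ((i : Fin n) → Fin (i.1 + 1)) → M) :
    ∑ x ∈ Finset.univ.filter (fun x => Function.update x i₀ 0 = y), F x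
      = ∑ c : Fin (i₀.1 + 1), F (Function.update y i₀ c) := by
  apply Finset.sum_nbij' (fun x => x i₀) (fun c => Function.update y i₀ c)
  · intro x hx
    exact Finset.mem_univ _
  · intro c _
    refine Finset.mem_filter.mpr ⟨Finset.mem_univ _, ?_⟩
    rw [Function.update_idem, ← hy, Function.update_eq_self]
  · intro x hx
    have hx' := (Finset.mem_filter.mp hx).2
    rw [← hx', Function.update_idem, Function.update_eq_self]
  · intro c _
    exact Function.update_self _ _ _
  · intro x hx
    have hx' := (Finset.mem_filter.mp hx).2
    rw [← hx', Function.update_idem, Function.update_eq_self]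

lemma sum_update {n : ℕ} (i₀ : Fin n) (y : (i : Fin n) → Fin (i.1 + 1)) (hy : y i₀ = 0)
    (c : Fin (i₀.1 + 1)) :
    ∑ i, ((Function.update y i₀ c) i : ℕ) = (∑ i, (y i : ℕ)) + (c : ℕ) := by
  have hcoe : (fun i => ((Function.update y i₀ c) i : ℕ))
      = Function.update (fun i => (y i : ℕ)) i₀ (c : ℕ) := by
    funext i
    by_cases h : i = i₀
    · subst h; simp
    · simp [Function.update_of_ne h]
  have h1 : ∑ i, ((Function.update y i₀ c) i : ℕ)
      = (c : ℕ) + ∑ i ∈ Finset.univ \ {i₀}, (y i : ℕ) := by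
    rw [show (∑ i, ((Function.update y i₀ c) i : ℕ))
        = ∑ i, (Function.update (fun i => (y i : ℕ)) i₀ (c : ℕ)) i from by rw [← hcoe]]
    exact Finset.sum_update_of_mem (Finset.mem_univ i₀) _ _
  have h2 : ∑ i, (y i : ℕ) = (∑ i ∈ Finset.univ \ {i₀}, (y i : ℕ)) + (y i₀ : ℕ) :=
    Finset.sum_eq_sum_sdiff_singleton_add (Finset.mem_univ i₀) _
  have h3 : (y i₀ : ℕ) = 0 := by rw [hy]; rfl
  omega


lemma main_aux {n : ℕ} (hn : 0 < n) (i₀ : Fin n) (hsz : (i₀ : ℕ) + 1 = n)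
    (S : Finset ((i : Fin n) → Fin (i.1 + 1)))
    (hupper : ∀ x ∈ S, ∀ y : (i : Fin n) → Fin (i.1 + 1), x ≤ y → y ∈ S) :
    |((S.filter fun x => Even (∑ i, (x i : ℕ))).card : ℤ) -
      ((S.filter fun x => Odd (∑ i, (x i : ℕ))).card : ℤ)| ≤ Nat.factorial (n - 1) := by
  set f : ((i : Fin n) → Fin (i.1 + 1)) → ℤ :=
    fun x => if x ∈ S then (-1:ℤ)^(∑ i, (x i : ℕ)) else 0 with hf
  set t : Finset ((i : Fin n) → Fin (i.1 + 1)) :=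
    Finset.univ.filter (fun y => y i₀ = 0) with htdef
  have hD : ((S.filter fun x => Even (∑ i, (x i : ℕ))).card : ℤ) -
      ((S.filter fun x => Odd (∑ i, (x i : ℕ))).card : ℤ) = ∑ x, f x := by
    rw [← signed_count S (fun x => ∑ i, (x i : ℕ))]
    rw [hf, Finset.sum_ite_mem Finset.univ S, Finset.univ_inter]
  have hfib : ∑ x, f x
      = ∑ y ∈ t, ∑ x ∈ Finset.univ.filter (fun x => Function.update x i₀ 0 = y), f x := by
    refine (Finset.sum_fiberwise_of_maps_to ?_ f).symm
    intro x _
    exact Finset.mem_filter.mpr ⟨Finset.mem_univ _, Function.update_self _ _ _⟩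
  have hbound : ∀ y ∈ t,
      |∑ x ∈ Finset.univ.filter (fun x => Function.update x i₀ 0 = y), f x| ≤ 1 := by
    intro y hy
    have hy0 : y i₀ = 0 := (Finset.mem_filter.mp hy).2
    rw [fiber_sum i₀ y hy0 f]
    have hσ : ∀ c : Fin (i₀.1 + 1),
        f (Function.update y i₀ c)
          = (-1:ℤ)^(∑ i, (y i : ℕ)) *
            (if Function.update y i₀ c ∈ S then (-1:ℤ)^(c:ℕ) else 0) := by
      intro c
      rw [hf]
      by_cases hm : Function.update y i₀ c ∈ S
      · simp only [hm, if_true, sum_update i₀ y hy0 c, pow_add]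
      · simp [hm]
    rw [Finset.sum_congr rfl fun c _ => hσ c, ← Finset.mul_sum, abs_mul, abs_pow,
      abs_neg, abs_one, one_pow, one_mul]
    apply chainA
    intro c c' hcc hc
    refine hupper _ hc _ ?_
    intro i
    by_cases h : i = i₀
    · subst h; simpa using hcc
    · simp [Function.update_of_ne h]
  have hcard : t.card = Nat.factorial (n - 1) := by
    have htot : ∑ y ∈ t, ∑ x ∈ Finset.univ.filter
        (fun x => Function.update x i₀ 0 = y), (1:ℕ)
        = ∑ x : (i : Fin n) → Fin (i.1 + 1), (1:ℕ) :=
      by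
      refine Finset.sum_fiberwise_of_maps_to ?_ _
      intro x _
      exact Finset.mem_filter.mpr ⟨Finset.mem_univ _, Function.update_self _ _ _⟩
    have hfibcard : ∀ y ∈ t, ∑ x ∈ Finset.univ.filter
        (fun x => Function.update x i₀ 0 = y), (1:ℕ) = n := by
      intro y hy
      rw [fiber_sum i₀ y (Finset.mem_filter.mp hy).2 (fun _ => (1:ℕ))]
      simp only [Finset.sum_const, Finset.card_univ, Fintype.card_fin, smul_eq_mul, mul_one]
      exact hsz
    have hL : ∑ x : (i : Fin n) → Fin (i.1 + 1), (1:ℕ) = Nat.factorial n := by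
      rw [Finset.sum_const, smul_eq_mul, mul_one, Finset.card_univ, Fintype.card_pi]
      simp only [Fintype.card_fin]
      rw [Fin.prod_univ_eq_prod_range (fun k => k + 1) n]
      exact Finset.prod_range_add_one_eq_factorial n
    rw [Finset.sum_congr rfl hfibcard, Finset.sum_const, smul_eq_mul, hL] at htot
    have hfac : Nat.factorial n = n * Nat.factorial (n - 1) := by
      obtain ⟨m, rfl⟩ : ∃ m, n = m + 1 := ⟨n - 1, (Nat.succ_pred_eq_of_pos hn).symm⟩
      simp [Nat.factorial_succ]
    rw [hfac, mul_comm t.card n] at htot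
    exact Nat.eq_of_mul_eq_mul_left hn htot
  rw [hD, hfib]
  calc |∑ y ∈ t, ∑ x ∈ Finset.univ.filter (fun x => Function.update x i₀ 0 = y), f x|
      ≤ ∑ y ∈ t, |∑ x ∈ Finset.univ.filter (fun x => Function.update x i₀ 0 = y), f x| :=
        Finset.abs_sum_le_sum_abs _ _
    _ ≤ ∑ _y ∈ t, (1:ℤ) := Finset.sum_le_sum hbound
    _ = t.card := by simp
    _ = Nat.factorial (n - 1) := by rw [hcard]

/-- Let `S` be an upper set in the product partial order on `∏_{k=1}^n {0,…,k-1}`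
(realized as `(i : Fin n) → Fin (i+1)`). Then the discrepancy of `S` — the absolute
difference between the number of points of `S` with even coordinate sum and the number
with odd coordinate sum — is at most `n!/n = (n-1)!`. -/
theorem stmt3 (n : ℕ) (S : Finset ((i : Fin n) → Fin (i.1 + 1)))
    (hupper : ∀ x ∈ S, ∀ y : (i : Fin n) → Fin (i.1 + 1), x ≤ y → y ∈ S) :
    |((S.filter fun x => Even (∑ i, (x i : ℕ))).card : ℤ) -
      ((S.filter fun x => Odd (∑ i, (x i : ℕ))).card : ℤ)| ≤ Nat.factorial (n - 1) := by
  rcases Nat.eq_zero_or_pos n with hn | hn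
  · subst hn
    have hS : S.card ≤ 1 := by
      have : S.card ≤ Fintype.card ((i : Fin 0) → Fin (i.1 + 1)) := Finset.card_le_univ S
      simpa using this
    have hodd : (S.filter fun x => Odd (∑ i, (x i : ℕ))).card = 0 := by
      simp [Finset.filter_eq_empty_iff]
    have heven : (S.filter fun x => Even (∑ i, (x i : ℕ))).card ≤ 1 :=
      le_trans (Finset.card_le_card (Finset.filter_subset _ _)) hS
    rw [hodd, Nat.cast_zero, sub_zero, abs_of_nonneg (by positivity)]
    exact_mod_cast heven
  · exact main_aux hn ⟨n - 1, by omega⟩ (by simp; omega) S hupper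
end

section
/- Let S ⊆ S_n be an upper set in the factorial lattice. Then |Σ_{σ ∈ S} sgn(σ)| ≤ n!/n, where sgn is the sign of the permutation. -/
section Aux

open Finset Equiv

lemma altIco (a b : ℕ) : |∑ i ∈ Finset.Ico a b, (-1:ℤ)^i| ≤ 1 := by
  rcases le_or_gt a b with h|h
  · rw [Finset.sum_Ico_eq_sub _ h, neg_one_geom_sum, neg_one_geom_sum]
    split <;> split <;> simp
  · rw [Finset.Ico_eq_empty (by omega)]; simp

lemma altUpset {n : ℕ} (T : Finset (Fin n)) (h : ∀ t ∈ T, ∀ s, t ≤ s → s ∈ T) :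
    |∑ t ∈ T, (-1:ℤ)^(t:ℕ)| ≤ 1 := by
  rcases T.eq_empty_or_nonempty with rfl|hne
  · simp
  · set a : ℕ := (T.min' hne : ℕ) with ha
    have hT : T = Finset.univ.filter (fun t : Fin n => a ≤ (t:ℕ)) := by
      apply Finset.ext; intro t
      simp only [Finset.mem_filter, Finset.mem_univ, true_and]
      constructor
      · intro ht; exact T.min'_le t ht
      · intro ht; exact h _ (T.min'_mem hne) t ht
    rw [hT, Finset.sum_filter]
    rw [Fin.sum_univ_eq_sum_range (fun i => if a ≤ i then (-1:ℤ)^i else 0)]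
    rw [← Finset.sum_filter]
    have : Finset.filter (fun i => a ≤ i) (Finset.range n) = Finset.Ico a n := by
      apply Finset.ext; intro i; simp [Finset.mem_Ico, and_comm]
    rw [this]; exact altIco _ _

lemma symm_mul {m : ℕ} (c ρ : Equiv.Perm (Fin (m+1))) (k : Fin (m+1)) :
    ((c⁻¹ * ρ).symm) k = ρ.symm (c k) := by
  show ((c⁻¹ * ρ)⁻¹) k = ρ⁻¹ (c k)
  rw [mul_inv_rev, inv_inv]; rfl

lemma cover_step {m : ℕ} (ρ : Equiv.Perm (Fin (m+1))) (hρ : ρ.symm 0 = Fin.last m)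
    (t : Fin (m+1)) (ht : (t:ℕ) < m) :
    FactCover ((Fin.cycleRange t)⁻¹ * ρ) ((Fin.cycleRange (t+1))⁻¹ * ρ) := by
  have htl : t < Fin.last m := by rw [Fin.lt_def]; simpa using ht
  have hval : ((t+1 : Fin (m+1)) : ℕ) = (t:ℕ) + 1 := Fin.val_add_one_of_lt htl
  have htt : t < t + 1 := by rw [Fin.lt_def, hval]; omega
  refine ⟨t, t+1, htt, ?_, ?_, ?_, ?_, ?_⟩
  · rw [symm_mul, symm_mul, Fin.cycleRange_self, Fin.cycleRange_of_gt htt, hρ]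
    have hne : ρ.symm (t+1) ≠ Fin.last m := by
      rw [← hρ]; intro h
      have := ρ.symm.injective h
      rw [Fin.ext_iff, hval] at this; simp at this
    exact lt_of_le_of_ne (Fin.le_last _) hne
  · rw [symm_mul, symm_mul, Fin.cycleRange_self, Fin.cycleRange_self]
  · rw [symm_mul, symm_mul, Fin.cycleRange_of_gt htt, Fin.cycleRange_of_lt htt]
  · intro k hk1 hk2
    rw [symm_mul, symm_mul]
    congr 1
    rcases lt_or_gt_of_ne hk1 with h|h
    · rw [Fin.cycleRange_of_lt h, Fin.cycleRange_of_lt (h.trans htt)]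
    · have h2 : t + 1 < k := by
        have hk : (t:ℕ) < (k:ℕ) := Fin.lt_def.mp h
        have hk2' : (k:ℕ) ≠ (t:ℕ)+1 := by
          intro he; apply hk2; symm; apply Fin.ext; rw [hval]; omega
        rw [Fin.lt_def, hval]; omega
      rw [Fin.cycleRange_of_gt h, Fin.cycleRange_of_gt h2]
  · intro k h1 h2
    rw [Fin.lt_def] at h1 h2; rw [hval] at h2; omega

lemma factle_chain {m : ℕ} (ρ : Equiv.Perm (Fin (m+1))) (hρ : ρ.symm 0 = Fin.last m)
    (a b : ℕ) (hab : a ≤ b) (hb : b < m+1) :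
    FactLe ((Fin.cycleRange (⟨a, by omega⟩ : Fin (m+1)))⁻¹ * ρ)
      ((Fin.cycleRange (⟨b, hb⟩ : Fin (m+1)))⁻¹ * ρ) := by
  induction b with
  | zero =>
    obtain rfl : a = 0 := Nat.le_zero.mp hab
    exact Relation.ReflTransGen.refl
  | succ b ih =>
    rcases Nat.lt_or_ge a (b+1) with h|h
    · have hab' : a ≤ b := by omega
      have hb' : b < m+1 := by omega
      have step : FactCover ((Fin.cycleRange (⟨b, hb'⟩ : Fin (m+1)))⁻¹ * ρ)
          ((Fin.cycleRange (⟨b+1, hb⟩ : Fin (m+1)))⁻¹ * ρ) := by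
        have hc := cover_step ρ hρ ⟨b, hb'⟩ (show b < m by omega)
        have hlt : (⟨b, hb'⟩ : Fin (m+1)) < Fin.last m := by
          rw [Fin.lt_def]; exact (show b < m by omega)
        have key : (⟨b, hb'⟩ : Fin (m+1)) + 1 = (⟨b+1, hb⟩ : Fin (m+1)) := by
          apply Fin.ext
          rw [Fin.val_add_one_of_lt hlt]
        rwa [key] at hc
      exact (ih hab' hb').tail step
    · obtain rfl : a = b + 1 := by omega
      exact Relation.ReflTransGen.refl

end Aux

/-- Let `S ⊆ S_n` be an upper set in the factorial lattice.
Then `|Σ_{σ ∈ S} sgn σ| ≤ n!/n = (n-1)!`. -/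
theorem stmt4 (n : ℕ) (S : Finset (Equiv.Perm (Fin n)))
    (hupper : ∀ σ ∈ S, ∀ τ : Equiv.Perm (Fin n), FactLe σ τ → τ ∈ S) :
    |∑ σ ∈ S, ((Equiv.Perm.sign σ : ℤˣ) : ℤ)| ≤ Nat.factorial (n - 1) := by
  classical
  open Finset Equiv in
  obtain _|m := n
  · -- n = 0
    have h1 : |∑ σ ∈ S, ((Equiv.Perm.sign σ : ℤˣ) : ℤ)| ≤
        ∑ σ ∈ S, |((Equiv.Perm.sign σ : ℤˣ) : ℤ)| := Finset.abs_sum_le_sum_abs _ _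
    have h2 : ∀ σ : Equiv.Perm (Fin 0), |((Equiv.Perm.sign σ : ℤˣ) : ℤ)| = 1 := by
      intro σ
      rcases Int.units_eq_one_or (Equiv.Perm.sign σ) with h|h <;> simp [h]
    have h3 : (S.card : ℤ) ≤ 1 := by
      have := Finset.card_le_univ S
      have hcard : Fintype.card (Equiv.Perm (Fin 0)) = 1 := by
        simp [Fintype.card_perm]
      rw [hcard] at this
      exact_mod_cast this
    calc |∑ σ ∈ S, ((Equiv.Perm.sign σ : ℤˣ) : ℤ)|
        ≤ ∑ σ ∈ S, |((Equiv.Perm.sign σ : ℤˣ) : ℤ)| := h1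
      _ = ∑ σ ∈ S, 1 := Finset.sum_congr rfl (fun σ _ => h2 σ)
      _ = (S.card : ℤ) := by simp
      _ ≤ 1 := h3
      _ = (Nat.factorial (0 - 1) : ℤ) := by simp [Nat.factorial]
  · -- n = m + 1
    set L : Fin (m+1) := Fin.last m with hL
    set f : Equiv.Perm (Fin (m+1)) → Equiv.Perm (Fin (m+1)) :=
      fun σ => Fin.cycleRange (σ L) * σ with hf
    have hf0 : ∀ σ, f σ L = 0 := by
      intro σ
      simp only [hf, Equiv.Perm.mul_apply]
      exact Fin.cycleRange_self _
    have hmaps : ∀ σ ∈ S, f σ ∈ S.image f := fun σ h => Finset.mem_image_of_mem f h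
    rw [← Finset.sum_fiberwise_of_maps_to hmaps]
    -- analysis of each fiber
    have key : ∀ ρ ∈ S.image f,
        |∑ σ ∈ S.filter (fun σ => f σ = ρ), ((Equiv.Perm.sign σ : ℤˣ) : ℤ)| ≤ 1 := by
      intro ρ hρim
      have hρL : ρ L = 0 := by
        obtain ⟨σ₀, _, rfl⟩ := Finset.mem_image.mp hρim
        exact hf0 σ₀
      have hρsymm : ρ.symm 0 = L := by
        rw [← hρL]; exact ρ.symm_apply_apply L
      -- σ in the fiber is determined by t = σ L
      have hback : ∀ t : Fin (m+1), ((Fin.cycleRange t)⁻¹ * ρ) L = t := by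
        intro t
        have : ρ L = Fin.cycleRange t t := by rw [hρL, Fin.cycleRange_self]
        show (Fin.cycleRange t)⁻¹ (ρ L) = t
        rw [this]
        exact (Fin.cycleRange t).symm_apply_apply t
      have hfiber : S.filter (fun σ => f σ = ρ) =
          (Finset.univ.filter (fun t : Fin (m+1) => (Fin.cycleRange t)⁻¹ * ρ ∈ S)).image
            (fun t => (Fin.cycleRange t)⁻¹ * ρ) := by
        apply Finset.ext; intro σ
        simp only [Finset.mem_filter, Finset.mem_image, Finset.mem_univ, true_and]
        constructor
        · rintro ⟨hσS, hfσ⟩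
          refine ⟨σ L, ?_, ?_⟩
          · rw [← hfσ]
            show (Fin.cycleRange (σ L))⁻¹ * (Fin.cycleRange (σ L) * σ) ∈ S
            rw [inv_mul_cancel_left]; exact hσS
          · rw [← hfσ]
            show (Fin.cycleRange (σ L))⁻¹ * (Fin.cycleRange (σ L) * σ) = σ
            rw [inv_mul_cancel_left]
        · rintro ⟨t, htS, rfl⟩
          refine ⟨htS, ?_⟩
          show Fin.cycleRange (((Fin.cycleRange t)⁻¹ * ρ) L) * ((Fin.cycleRange t)⁻¹ * ρ) = ρ
          rw [hback, mul_inv_cancel_left]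
      rw [hfiber, Finset.sum_image (by
        intro t1 _ t2 _ heq
        have := congrArg (fun σ : Equiv.Perm (Fin (m+1)) => σ L) heq
        simpa only [hback] using this)]
      -- sign computation
      have hsign : ∀ t : Fin (m+1),
          ((Equiv.Perm.sign ((Fin.cycleRange t)⁻¹ * ρ) : ℤˣ) : ℤ)
            = (-1:ℤ)^(t:ℕ) * ((Equiv.Perm.sign ρ : ℤˣ) : ℤ) := by
        intro t
        rw [map_mul, Equiv.Perm.sign_inv, Fin.sign_cycleRange]
        push_cast
        ring
      rw [Finset.sum_congr rfl (fun t _ => hsign t), ← Finset.sum_mul, abs_mul]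
      have habs : |((Equiv.Perm.sign ρ : ℤˣ) : ℤ)| = 1 := by
        rcases Int.units_eq_one_or (Equiv.Perm.sign ρ) with h|h <;> simp [h]
      rw [habs, mul_one]
      -- upper set property of the fiber index set
      apply altUpset
      intro t ht s hts
      simp only [Finset.mem_filter, Finset.mem_univ, true_and] at ht ⊢
      refine hupper _ ht _ ?_
      have := factle_chain ρ hρsymm (t:ℕ) (s:ℕ) hts s.isLt
      simpa only [Fin.eta] using this
    -- total bound
    have hcard : ((S.image f).card : ℤ) ≤ (Nat.factorial m : ℤ) := by
      have hsub : S.image f ⊆ Finset.univ.filter (fun ρ : Equiv.Perm (Fin (m+1)) => ρ L = 0) := by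
        intro ρ hρim
        obtain ⟨σ₀, _, rfl⟩ := Finset.mem_image.mp hρim
        simp only [Finset.mem_filter, Finset.mem_univ, true_and]
        exact hf0 σ₀
      have fst : ∀ σ : Equiv.Perm (Fin (m+1)), (Equiv.Perm.decomposeFin σ).1 = σ 0 := by
        intro σ
        have h := Equiv.Perm.decomposeFin_symm_apply_zero
          (Equiv.Perm.decomposeFin σ).1 (Equiv.Perm.decomposeFin σ).2
        rw [Prod.mk.eta, Equiv.symm_apply_apply] at h
        exact h.symm
      have hinj : Set.InjOn (fun ρ : Equiv.Perm (Fin (m+1)) => (Equiv.Perm.decomposeFin ρ⁻¹).2)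
          ↑(Finset.univ.filter (fun ρ : Equiv.Perm (Fin (m+1)) => ρ L = 0)) := by
        intro ρ1 h1 ρ2 h2 heq
        simp only [Finset.coe_filter, Set.mem_setOf_eq, Finset.mem_univ, true_and] at h1 h2
        have e1 : ρ1⁻¹ 0 = L := by rw [← h1]; exact ρ1.symm_apply_apply L
        have e2 : ρ2⁻¹ 0 = L := by rw [← h2]; exact ρ2.symm_apply_apply L
        have : Equiv.Perm.decomposeFin ρ1⁻¹ = Equiv.Perm.decomposeFin ρ2⁻¹ := by
          apply Prod.ext
          · rw [fst, fst, e1, e2]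
          · exact heq
        have := Equiv.Perm.decomposeFin.injective this
        exact inv_injective this
      have hle : (Finset.univ.filter (fun ρ : Equiv.Perm (Fin (m+1)) => ρ L = 0)).card ≤
          (Finset.univ : Finset (Equiv.Perm (Fin m))).card := by
        apply Finset.card_le_card_of_injOn _ (fun _ _ => Finset.mem_univ _) hinj
      have hc2 : (Finset.univ : Finset (Equiv.Perm (Fin m))).card = Nat.factorial m := by
        rw [Finset.card_univ, Fintype.card_perm, Fintype.card_fin]
      have := (Finset.card_le_card hsub).trans (hle.trans_eq hc2)
      exact_mod_cast this
    calc |∑ ρ ∈ S.image f, ∑ σ ∈ S.filter (fun σ => f σ = ρ), ((Equiv.Perm.sign σ : ℤˣ) : ℤ)|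
        ≤ ∑ ρ ∈ S.image f,
            |∑ σ ∈ S.filter (fun σ => f σ = ρ), ((Equiv.Perm.sign σ : ℤˣ) : ℤ)| :=
          Finset.abs_sum_le_sum_abs _ _
      _ ≤ ∑ _ρ ∈ S.image f, (1:ℤ) := Finset.sum_le_sum key
      _ = ((S.image f).card : ℤ) := by simp
      _ ≤ (Nat.factorial m : ℤ) := hcard
      _ = (Nat.factorial (m + 1 - 1) : ℤ) := by simp
end

section
/- For n ≥ 400, every irreducible representation ρ of the symmetric group S_n has dimension d_ρ > n²/3, except for the trivial representation, the sign (alternating) representation, the standard representation (partition (n−1,1)), and its conjugate (partition (2,1^{n−2})). -/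
/-- `f : ℕ × ℕ → ℕ` is a standard Young tableau of shape `μ`: it maps the cells of `μ`
bijectively onto `{1,…,n}` (where `n = μ.card`), vanishes outside `μ`, and is strictly
increasing along rows and columns. -/
def IsSYT (μ : YoungDiagram) (f : ℕ × ℕ → ℕ) : Prop :=
  Set.BijOn f ↑μ.cells (Set.Icc 1 μ.card) ∧
  (∀ p : ℕ × ℕ, p ∉ μ → f p = 0) ∧
  (∀ p q : ℕ × ℕ, p ∈ μ → q ∈ μ → p.1 = q.1 → p.2 < q.2 → f p < f q) ∧
  (∀ p q : ℕ × ℕ, p ∈ μ → q ∈ μ → p.2 = q.2 → p.1 < q.1 → f p < f q)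

/-- The number of standard Young tableaux of shape `μ`; this equals the dimension of the
irreducible representation of `S_n` indexed by `μ`. -/
noncomputable def sytCount (μ : YoungDiagram) : ℕ :=
  Nat.card {f : ℕ × ℕ → ℕ // IsSYT μ f}

namespace SYT5

open Finset


open Finset

/-- The subtype of SYT of a given shape is finite. -/
lemma finite_syt (μ : YoungDiagram) : Finite {f : ℕ × ℕ → ℕ // IsSYT μ f} := by
  classical
  let F : {f : ℕ × ℕ → ℕ // IsSYT μ f} → (↥μ.cells → ↥(Set.Icc 1 μ.card)) := fun f c =>
    ⟨f.1 c.1, f.2.1.mapsTo (by simpa using c.2)⟩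
  have hF : Function.Injective F := by
    rintro ⟨f, hf⟩ ⟨g, hg⟩ h
    ext p
    show f p = g p
    by_cases hp : p ∈ μ
    · have := congrFun h ⟨p, by simpa using hp⟩
      simpa [F] using this
    · rw [hf.2.1 p hp, hg.2.1 p hp]
  exact Finite.of_injective F hF

lemma card_le_sytCount {μ : YoungDiagram} {α : Type*}
    (F : α → {f : ℕ × ℕ → ℕ // IsSYT μ f}) (hF : Function.Injective F) :
    Nat.card α ≤ sytCount μ := by
  have := finite_syt μ
  exact Nat.card_le_card_of_injective F hF

lemma bijOn_of_injOn (μ : YoungDiagram) (f : ℕ × ℕ → ℕ)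
    (hmap : ∀ p ∈ μ, f p ∈ Finset.Icc 1 μ.card)
    (hinj : Set.InjOn f ↑μ.cells) : Set.BijOn f ↑μ.cells (Set.Icc 1 μ.card) := by
  have himg : μ.cells.image f = Finset.Icc 1 μ.card := by
    apply Finset.eq_of_subset_of_card_le
    · intro x hx
      obtain ⟨p, hp, rfl⟩ := Finset.mem_image.1 hx
      exact hmap p (by simpa using hp)
    · rw [Finset.card_image_of_injOn hinj, Nat.card_Icc]
      simp [YoungDiagram.card]
  refine ⟨fun p hp => ?_, hinj, fun x hx => ?_⟩
  · have := hmap p (by simpa using hp)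
    simpa [← Finset.coe_Icc] using this
  · have hx' : x ∈ μ.cells.image f := by
      rw [himg]; simpa [← Finset.coe_Icc] using hx
    obtain ⟨p, hp, rfl⟩ := Finset.mem_image.1 hx'
    exact ⟨p, by simpa using hp, rfl⟩

/-- transpose invariance -/
lemma card_transpose (μ : YoungDiagram) : μ.transpose.card = μ.card := by
  apply Finset.card_bij (fun c _ => Prod.swap c)
  · intro c hc
    simpa using (YoungDiagram.mem_transpose.1 (by simpa using hc))
  · intro c₁ _ c₂ _ h
    exact Prod.swap_injective h
  · intro c hc
    exact ⟨Prod.swap c, by simpa using (by simpa using hc : c ∈ μ), by simp⟩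

lemma isSYT_transpose {μ : YoungDiagram} {f : ℕ × ℕ → ℕ} (hf : IsSYT μ f) :
    IsSYT μ.transpose (f ∘ Prod.swap) := by
  obtain ⟨hbij, hzero, hrow, hcol⟩ := hf
  have hswap : Set.BijOn Prod.swap (μ.transpose.cells : Set (ℕ × ℕ)) (μ.cells : Set (ℕ × ℕ)) := by
    refine ⟨fun c hc => ?_, fun c₁ _ c₂ _ h => Prod.swap_injective h, fun c hc => ?_⟩
    · simpa using (YoungDiagram.mem_transpose.1 (by simpa using hc))
    · exact ⟨Prod.swap c, by simpa using (by simpa using hc : c ∈ μ), by simp⟩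
  refine ⟨?_, ?_, ?_, ?_⟩
  · have := hbij.comp hswap
    rwa [card_transpose]
  · intro p hp
    apply hzero
    intro hmem
    exact hp (YoungDiagram.mem_transpose.2 (by simpa using hmem))
  · intro p q hp hq h1 h2
    exact hcol p.swap q.swap (YoungDiagram.mem_transpose.1 hp) (YoungDiagram.mem_transpose.1 hq)
      (by simpa using h1) (by simpa using h2)
  · intro p q hp hq h1 h2
    exact hrow p.swap q.swap (YoungDiagram.mem_transpose.1 hp) (YoungDiagram.mem_transpose.1 hq)
      (by simpa using h1) (by simpa using h2)

lemma sytCount_transpose (μ : YoungDiagram) : sytCount μ.transpose = sytCount μ := by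
  apply Nat.card_congr
  refine ⟨fun f => ⟨f.1 ∘ Prod.swap, ?_⟩, fun f => ⟨f.1 ∘ Prod.swap, ?_⟩, ?_, ?_⟩
  · have := isSYT_transpose (μ := μ.transpose) f.2
    rwa [YoungDiagram.transpose_transpose] at this
  · exact isSYT_transpose f.2
  · intro f; ext p; simp
  · intro f; ext p; simp


open Finset

/-- card = sum of row lengths over any range covering all rows -/
lemma card_eq_sum_rowLen (μ : YoungDiagram) (B : ℕ) (hB : μ.colLen 0 ≤ B) :
    μ.card = ∑ i ∈ Finset.range B, μ.rowLen i := by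
  classical
  have hcells : μ.cells = (Finset.range B).biUnion (fun i => μ.row i) := by
    ext c
    simp only [Finset.mem_biUnion, Finset.mem_range, YoungDiagram.mem_row_iff]
    constructor
    · intro hc
      refine ⟨c.1, ?_, by simpa using hc, rfl⟩
      have : c.1 < μ.colLen c.2 := by
        have := YoungDiagram.mem_iff_lt_colLen.1 (show (c.1, c.2) ∈ μ by simpa using hc)
        exact this
      exact lt_of_lt_of_le (this.trans_le (μ.colLen_anti 0 c.2 (Nat.zero_le _))) hB
    · rintro ⟨i, _, hc, _⟩
      simpa using hc
  rw [YoungDiagram.card, hcells, Finset.card_biUnion]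
  · apply Finset.sum_congr rfl
    intro i _
    exact (μ.rowLen_eq_card).symm
  · intro i _ j _ hij
    simp only [Finset.disjoint_left, YoungDiagram.mem_row_iff]
    rintro c ⟨_, rfl⟩ ⟨_, h⟩
    exact hij h

lemma rowLen_pos_iff {μ : YoungDiagram} {i : ℕ} : 0 < μ.rowLen i ↔ i < μ.colLen 0 := by
  rw [← YoungDiagram.mem_iff_lt_rowLen, ← YoungDiagram.mem_iff_lt_colLen]

lemma card_le_mul (μ : YoungDiagram) : μ.card ≤ μ.rowLen 0 * μ.colLen 0 := by
  rw [card_eq_sum_rowLen μ (μ.colLen 0) le_rfl]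
  calc ∑ i ∈ Finset.range (μ.colLen 0), μ.rowLen i
      ≤ ∑ _i ∈ Finset.range (μ.colLen 0), μ.rowLen 0 :=
        Finset.sum_le_sum (fun i _ => μ.rowLen_anti 0 i (Nat.zero_le _))
    _ = μ.rowLen 0 * μ.colLen 0 := by simp [Nat.mul_comm]

/-- arithmetic: log bound -/
lemma twelve_log_le (n : ℕ) (hn : 400 ≤ n) : 12 * Nat.log 2 n + 36 ≤ n := by
  rcases lt_or_ge n 512 with h | h
  · have hL : Nat.log 2 n = 8 := by
      have h1 : (2:ℕ)^8 ≤ n := by norm_num; omega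
      have h2 : n < (2:ℕ)^9 := by norm_num; omega
      exact Nat.log_eq_of_pow_le_of_lt_pow h1 h2
    omega
  · -- n ≥ 512, L ≥ 9, show 12 L + 36 ≤ 2^L ≤ n
    have hL9 : 9 ≤ Nat.log 2 n := by
      refine (Nat.le_log_iff_pow_le (by norm_num) (by omega)).2 ?_
      norm_num
      omega
    have key : ∀ L, 9 ≤ L → 12 * L + 36 ≤ 2 ^ L := by
      intro L hL
      induction L with
      | zero => omega
      | succ m ih =>
        rcases Nat.lt_or_ge m 9 with hm | hm
        · interval_cases m <;> revert hL <;> norm_num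
        · have h1 := ih hm
          have h2 : (12:ℕ) ≤ 2 ^ m := le_trans (by omega) h1
          rw [pow_succ]
          omega
    exact le_trans (key _ hL9) (le_trans (Nat.pow_log_le_self 2 (by omega)) le_rfl)

lemma nsq_lt_pow (n : ℕ) (hn : 1 ≤ n) : n ^ 2 < 3 * 2 ^ (2 * Nat.log 2 n + 3) := by
  have h := Nat.lt_pow_succ_log_self (show 1 < 2 by norm_num) n
  have h2 : n ^ 2 < 2 ^ (2 * Nat.log 2 n + 2) := by
    calc n ^ 2 < (2 ^ (Nat.log 2 n + 1)) ^ 2 := Nat.pow_lt_pow_left h (by norm_num)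
      _ = 2 ^ (2 * Nat.log 2 n + 2) := by rw [← pow_mul]; congr 1; ring
  have h3 : (2:ℕ) ^ (2 * Nat.log 2 n + 3) = 2 ^ (2 * Nat.log 2 n + 2) * 2 := pow_succ 2 _
  omega

/-- a^4 < 3 * 2^(a-2) for a ≥ 20 -/
lemma pow4_lt (a : ℕ) (ha : 20 ≤ a) : a ^ 4 < 3 * 2 ^ (a - 2) := by
  induction a with
  | zero => omega
  | succ m ih =>
    rcases Nat.lt_or_ge m 20 with hm | hm
    · have : m = 19 := by omega
      subst this; norm_num
    · have h1 := ih hm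
      have hc : 20 * m^3 ≤ m * m^3 := Nat.mul_le_mul_right _ hm
      have e1 : m^2 ≤ m^3 := Nat.pow_le_pow_right (by omega) (by norm_num)
      have e2 : m ≤ m^3 := Nat.le_self_pow (by norm_num) m
      have e3 : 1 ≤ m^3 := Nat.one_le_iff_ne_zero.2 (by positivity)
      have h2 : (m+1)^4 ≤ 2 * m^4 := by nlinarith
      have h3 : m + 1 - 2 = (m - 2) + 1 := by omega
      have h4 : (2:ℕ) ^ (m - 2 + 1) = 2 ^ (m - 2) * 2 := pow_succ 2 _
      have h5 : (m+1)^4 = (m+1)^3 * (m+1) := by ring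
      rw [h3, h4]
      omega

/-- the main quadratic bound : 2n² < 3 m (m-1) with m = n - (2 log + 5)  -/
lemma main_quad (n : ℕ) (hn : 400 ≤ n) :
    2 * n ^ 2 < 3 * ((n - (2 * Nat.log 2 n + 5)) * ((n - (2 * Nat.log 2 n + 5)) - 1)) := by
  have hlog := twelve_log_le n hn
  set L := Nat.log 2 n
  set m := n - (2 * L + 5) with hm
  have h6m : 5 * n + 6 ≤ 6 * m := by omega
  have h6m1 : 5 * n ≤ 6 * (m - 1) := by omega
  have key : 25 * n ^ 2 + 30 * n ≤ 36 * (m * (m - 1)) := by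
    calc 25 * n^2 + 30*n = (5*n+6) * (5*n) := by ring
      _ ≤ (6*m) * (6 * (m-1)) := Nat.mul_le_mul h6m h6m1
      _ = 36 * (m * (m-1)) := by ring
  nlinarith

open Finset

lemma choose_two_le_choose (m s : ℕ) (h2 : 2 ≤ s) (hs : s + 2 ≤ m) :
    m.choose 2 ≤ m.choose s := by
  have aux : ∀ j, 2 ≤ j → j ≤ m / 2 → m.choose 2 ≤ m.choose j := by
    intro j
    induction j with
    | zero => omega
    | succ i ih =>
      intro h2i hi
      rcases Nat.lt_or_ge i 2 with hi2 | hi2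
      · have : i + 1 = 2 := by omega
        rw [this]
      · have step := Nat.choose_le_succ_of_lt_half_left (show i < m / 2 by omega)
        exact le_trans (ih hi2 (by omega)) step
  rcases le_or_gt s (m / 2) with h | h
  · exact aux s h2 h
  · have hsym : m.choose s = m.choose (m - s) := (Nat.choose_symm (by omega)).symm
    rw [hsym]
    exact aux (m - s) (by omega) (by omega)

/-- Nat.card of coe of a Finset -/
lemma nat_card_coe (s : Finset ℕ) : Nat.card {x // x ∈ s} = s.card := by
  simp [Nat.card_eq_fintype_card]

lemma nat_card_powersetCard (s : Finset ℕ) (r : ℕ) :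
    Nat.card {Y // Y ∈ s.powersetCard r} = s.card.choose r := by
  classical
  have : Nat.card {Y // Y ∈ s.powersetCard r} = (s.powersetCard r).card := by
    rw [Nat.card_eq_fintype_card]
    exact Fintype.card_coe _
  rw [this, Finset.card_powersetCard]


def Roff (μ : YoungDiagram) (i : ℕ) : ℕ := ∑ i' ∈ Finset.range i, μ.rowLen i'

lemma Roff_succ (μ : YoungDiagram) (i : ℕ) : Roff μ (i + 1) = Roff μ i + μ.rowLen i :=
  Finset.sum_range_succ _ _

lemma Roff_mono (μ : YoungDiagram) {i i' : ℕ} (h : i ≤ i') : Roff μ i ≤ Roff μ i' :=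
  Finset.sum_le_sum_of_subset (Finset.range_subset_range.2 h)

lemma Roff_two (μ : YoungDiagram) : Roff μ 2 = μ.rowLen 0 + μ.rowLen 1 := by
  simp [Roff, Finset.sum_range_succ]

lemma Roff_le_card (μ : YoungDiagram) {i : ℕ} (h : i ≤ μ.colLen 0) : Roff μ i ≤ μ.card := by
  rw [card_eq_sum_rowLen μ (μ.colLen 0) le_rfl]
  exact Roff_mono μ h

def eps (E : Finset ℕ) (p : ℕ) : ℕ := if p ∈ E then 1 else 0

lemma eps_le (E : Finset ℕ) (p : ℕ) : eps E p ≤ 1 := by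
  unfold eps; split_ifs <;> first | contradiction | omega

def val (μ : YoungDiagram) (K : ℕ) (E : Finset ℕ) (i j : ℕ) : ℕ :=
  if i = 0 then
    (if j = 0 then 1 else if j ≤ K - 1 then 2 * j + 1 - eps E j else j + K + 1)
  else if i = 1 then
    (if j ≤ K - 2 then 2 * j + 2 + eps E (j + 1)
     else if j = K - 1 then 2 * K else μ.rowLen 0 + j + 1)
  else Roff μ i + j + 1

def fB (μ : YoungDiagram) (K : ℕ) (E : Finset ℕ) (p : ℕ × ℕ) : ℕ :=
  if p ∈ μ then val μ K E p.1 p.2 else 0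

section Bfacts
variable (μ : YoungDiagram) (K : ℕ) (E : Finset ℕ)

lemma val_row0_mono (hK2 : 2 ≤ K) {j j' : ℕ} (h : j < j') :
    val μ K E 0 j < val μ K E 0 j' := by
  have h1 := eps_le E j
  have h2 := eps_le E j'
  unfold val
  split_ifs <;> first | contradiction | omega

lemma val_row1_mono (hK2 : 2 ≤ K) (hKa : K < μ.rowLen 0) {j j' : ℕ} (h : j < j') :
    val μ K E 1 j < val μ K E 1 j' := by
  have h1 := eps_le E (j + 1)
  have h2 := eps_le E (j' + 1)
  unfold val
  split_ifs <;> first | contradiction | omega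

lemma val_col01 (hK2 : 2 ≤ K) (hKa : K < μ.rowLen 0) (j : ℕ) :
    val μ K E 0 j < val μ K E 1 j := by
  have h1 := eps_le E j
  have h2 := eps_le E (j + 1)
  unfold val
  split_ifs <;> first | contradiction | omega

lemma val_row0_le (hK2 : 2 ≤ K) {j : ℕ} (hj : j < μ.rowLen 0) :
    val μ K E 0 j ≤ μ.rowLen 0 + K := by
  have h1 := eps_le E j
  unfold val
  split_ifs <;> first | contradiction | omega

lemma val_row1_le (hK2 : 2 ≤ K) (hKk : K ≤ μ.rowLen 1) (hKa : K < μ.rowLen 0)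
    {j : ℕ} (hj : j < μ.rowLen 1) :
    val μ K E 1 j ≤ μ.rowLen 0 + μ.rowLen 1 := by
  have h1 := eps_le E (j + 1)
  unfold val
  split_ifs <;> first | contradiction | omega

lemma val_pos (i j : ℕ) : 1 ≤ val μ K E i j := by
  have h1 := eps_le E j
  unfold val
  split_ifs <;> first | contradiction | omega

lemma val_disj01 (hK2 : 2 ≤ K) (hKk : K ≤ μ.rowLen 1) (hKa : K < μ.rowLen 0)
    {j j' : ℕ} (hj : j < μ.rowLen 0) (hj' : j' < μ.rowLen 1) :
    val μ K E 0 j ≠ val μ K E 1 j' := by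
  by_cases hjj : j = j' + 1
  · subst hjj
    have h1 := eps_le E (j' + 1)
    unfold val
    split_ifs <;> first | contradiction | omega
  · have h1 := eps_le E j
    have h2 := eps_le E (j' + 1)
    unfold val
    split_ifs <;> first | contradiction | omega

end Bfacts

section Bmain
variable (μ : YoungDiagram) (K : ℕ) (E : Finset ℕ)

lemma val_two (m j : ℕ) : val μ K E (m + 2) j = Roff μ (m + 2) + j + 1 := by
  simp [val]

lemma val_row_mono (hK2 : 2 ≤ K) (hKa : K < μ.rowLen 0) {i j j' : ℕ} (h : j < j') :
    val μ K E i j < val μ K E i j' := by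
  match i with
  | 0 => exact val_row0_mono μ K E hK2 h
  | 1 => exact val_row1_mono μ K E hK2 hKa h
  | (m+2) => rw [val_two, val_two]; omega

lemma val_le_card (hK2 : 2 ≤ K) (hKk : K ≤ μ.rowLen 1) (hKa : K < μ.rowLen 0)
    {i j : ℕ} (hij : (i, j) ∈ μ) : val μ K E i j ≤ μ.card := by
  have hj : j < μ.rowLen i := YoungDiagram.mem_iff_lt_rowLen.1 hij
  have hb2 : 2 ≤ μ.colLen 0 := by
    have : (1, 0) ∈ μ := YoungDiagram.mem_iff_lt_rowLen.2 (by omega)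
    exact YoungDiagram.mem_iff_lt_colLen.1 this
  have hRc : Roff μ 2 ≤ μ.card := Roff_le_card μ hb2
  have hR2 := Roff_two μ
  match i with
  | 0 => have := val_row0_le μ K E hK2 hj; omega
  | 1 => have := val_row1_le μ K E hK2 hKk hKa hj; omega
  | (m+2) =>
    rw [val_two]
    have hcol : m + 2 < μ.colLen 0 := by
      have : (m + 2, 0) ∈ μ := μ.up_left_mem le_rfl (Nat.zero_le _) hij
      exact YoungDiagram.mem_iff_lt_colLen.1 this
    have h1 := Roff_le_card μ (i := m + 2 + 1) (by omega)
    have h2 := Roff_succ μ (m + 2)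
    omega

lemma val_col_lt (hK2 : 2 ≤ K) (hKk : K ≤ μ.rowLen 1) (hKa : K < μ.rowLen 0)
    {i j i' j' : ℕ} (hij : (i, j) ∈ μ) (hij' : (i', j') ∈ μ) (hii : i < i') (hjj : j' = j) :
    val μ K E i j < val μ K E i' j' := by
  have hj : j < μ.rowLen i := YoungDiagram.mem_iff_lt_rowLen.1 hij
  have hR2 := Roff_two μ
  match i, i' with
  | 0, 1 =>
    subst hjj
    exact val_col01 μ K E hK2 hKa j'
  | 0, (m+2) =>
    rw [val_two]
    have h0 := val_row0_le μ K E hK2 hj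
    have hR : Roff μ 2 ≤ Roff μ (m+2) := Roff_mono μ (by omega)
    omega
  | 1, (m+2) =>
    rw [val_two]
    have h0 := val_row1_le μ K E hK2 hKk hKa hj
    have hR : Roff μ 2 ≤ Roff μ (m+2) := Roff_mono μ (by omega)
    omega
  | (m+2), (m'+2) =>
    rw [val_two, val_two]
    have h1 : Roff μ (m + 2 + 1) ≤ Roff μ (m' + 2) := Roff_mono μ (by omega)
    have h2 := Roff_succ μ (m + 2)
    omega

lemma val_ne (hK2 : 2 ≤ K) (hKk : K ≤ μ.rowLen 1) (hKa : K < μ.rowLen 0)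
    {i j i' j' : ℕ} (hij : (i, j) ∈ μ) (hij' : (i', j') ∈ μ) (hii : i < i') :
    val μ K E i j ≠ val μ K E i' j' := by
  have hj : j < μ.rowLen i := YoungDiagram.mem_iff_lt_rowLen.1 hij
  have hj' : j' < μ.rowLen i' := YoungDiagram.mem_iff_lt_rowLen.1 hij'
  have hR2 := Roff_two μ
  match i, i' with
  | 0, 1 =>
    exact val_disj01 μ K E hK2 hKk hKa (by omega) hj'
  | 0, (m+2) =>
    rw [val_two]
    have h0 := val_row0_le μ K E hK2 (show j < μ.rowLen 0 by omega)
    have hR : Roff μ 2 ≤ Roff μ (m+2) := Roff_mono μ (by omega)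
    omega
  | 1, (m+2) =>
    rw [val_two]
    have h0 := val_row1_le μ K E hK2 hKk hKa hj
    have hR : Roff μ 2 ≤ Roff μ (m+2) := Roff_mono μ (by omega)
    omega
  | (m+2), (m'+2) =>
    rw [val_two, val_two]
    have h1 : Roff μ (m + 2 + 1) ≤ Roff μ (m' + 2) := Roff_mono μ (by omega)
    have h2 := Roff_succ μ (m + 2)
    have : j + 1 ≤ μ.rowLen (m + 2) := hj
    omega

lemma isSYT_fB (hK2 : 2 ≤ K) (hKk : K ≤ μ.rowLen 1) (hKa : K < μ.rowLen 0) :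
    IsSYT μ (fB μ K E) := by
  have hmem : ∀ p : ℕ × ℕ, p ∈ μ → fB μ K E p = val μ K E p.1 p.2 := by
    intro p hp; simp [fB, hp]
  have hinj : Set.InjOn (fB μ K E) ↑μ.cells := by
    intro p hp q hq hfpq
    have hp' : p ∈ μ := by simpa using hp
    have hq' : q ∈ μ := by simpa using hq
    rw [hmem p hp', hmem q hq'] at hfpq
    have hp2 : (p.1, p.2) ∈ μ := by simpa using hp'
    have hq2 : (q.1, q.2) ∈ μ := by simpa using hq'
    rcases lt_trichotomy p.1 q.1 with h | h | h
    · exact absurd hfpq (val_ne μ K E hK2 hKk hKa hp2 hq2 h)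
    · rcases lt_trichotomy p.2 q.2 with h2 | h2 | h2
      · rw [h] at hfpq
        have := val_row_mono μ K E hK2 hKa (i := q.1) h2
        omega
      · exact Prod.ext h h2
      · rw [h] at hfpq
        have := val_row_mono μ K E hK2 hKa (i := q.1) h2
        omega
    · exact absurd hfpq.symm (val_ne μ K E hK2 hKk hKa hq2 hp2 h)
  refine ⟨?_, ?_, ?_, ?_⟩
  · apply bijOn_of_injOn μ (fB μ K E) ?_ hinj
    intro p hp
    rw [Finset.mem_Icc, hmem p hp]
    exact ⟨val_pos μ K E _ _, val_le_card μ K E hK2 hKk hKa (by simpa using hp)⟩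
  · intro p hp; simp [fB, hp]
  · intro p q hp hq h1 h2
    rw [hmem p hp, hmem q hq, ← h1]
    exact val_row_mono μ K E hK2 hKa h2
  · intro p q hp hq h1 h2
    rw [hmem p hp, hmem q hq]
    exact val_col_lt μ K E hK2 hKk hKa (by simpa using hp) (by simpa using hq) h2 h1.symm

end Bmain

lemma nat_card_coe' {α : Type*} (s : Finset α) : Nat.card {x // x ∈ s} = s.card := by
  rw [Nat.card_eq_fintype_card]; exact Fintype.card_coe _

lemma B_bound (μ : YoungDiagram) (K : ℕ) (hK2 : 2 ≤ K) (hKk : K ≤ μ.rowLen 1)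
    (hKa : K < μ.rowLen 0) : 2 ^ (K - 1) ≤ sytCount μ := by
  classical
  have hsyt : ∀ E : Finset ℕ, IsSYT μ (fB μ K E) := fun E => isSYT_fB μ K E hK2 hKk hKa
  let Φ : {E // E ∈ (Finset.Icc 1 (K - 1)).powerset} → {f // IsSYT μ f} :=
    fun E => ⟨fB μ K E.1, hsyt E.1⟩
  have hΦ : Function.Injective Φ := by
    rintro ⟨E, hE⟩ ⟨E', hE'⟩ h
    have hfun : fB μ K E = fB μ K E' := congrArg Subtype.val h
    apply Subtype.ext
    ext p
    simp only [Finset.mem_powerset] at hE hE'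
    by_cases hp : p ∈ Finset.Icc 1 (K - 1)
    · have hp1 : 1 ≤ p ∧ p ≤ K - 1 := Finset.mem_Icc.1 hp
      have hcell : (0, p) ∈ μ := YoungDiagram.mem_iff_lt_rowLen.2 (by omega)
      have hthis := congrFun hfun (0, p)
      simp only [fB, if_pos hcell] at hthis
      have hp0 : ¬ p = 0 := by omega
      have hv : 2 * p + 1 - eps E p = 2 * p + 1 - eps E' p := by
        simpa [val, hp0, hp1.2] using hthis
      have h1 := eps_le E p
      have h2 := eps_le E' p
      have heq : eps E p = eps E' p := by omega
      simp only [eps] at heq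
      split_ifs at heq <;> simp_all
    · constructor
      · intro hmem; exact absurd (hE hmem) hp
      · intro hmem; exact absurd (hE' hmem) hp
  have hcard := card_le_sytCount Φ hΦ
  have hc2 : Nat.card {E // E ∈ (Finset.Icc 1 (K - 1)).powerset} = 2 ^ (K - 1) := by
    rw [nat_card_coe', Finset.card_powerset, Nat.card_Icc]
    norm_num
  omega

/-! ### H-family: free values in the singleton-row tail -/

def sget (s : Finset ℕ) (m : ℕ) : ℕ := (s.sort (· ≤ ·)).getD m 0

lemma sget_mem (s : Finset ℕ) {m : ℕ} (h : m < s.card) : sget s m ∈ s := by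
  unfold sget
  rw [List.getD_eq_getElem _ _ (by rwa [Finset.length_sort])]
  rw [← Finset.mem_sort (· ≤ ·)]
  exact List.getElem_mem _

lemma sget_lt (s : Finset ℕ) {m m' : ℕ} (h : m < m') (h' : m' < s.card) :
    sget s m < sget s m' := by
  unfold sget
  have hl : m' < (s.sort (· ≤ ·)).length := by rwa [Finset.length_sort]
  rw [List.getD_eq_getElem _ _ (lt_trans h hl), List.getD_eq_getElem _ _ hl]
  exact (Finset.sortedLT_sort s).getElem_lt_getElem_iff.2 h

lemma sget_surj (s : Finset ℕ) {y : ℕ} (hy : y ∈ s) : ∃ m, m < s.card ∧ sget s m = y := by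
  have hmem : y ∈ s.sort (· ≤ ·) := (Finset.mem_sort _).2 hy
  obtain ⟨m, hm, hg⟩ := List.mem_iff_getElem.1 hmem
  refine ⟨m, by rwa [Finset.length_sort] at hm, ?_⟩
  unfold sget
  rw [List.getD_eq_getElem _ _ hm, hg]

def Qoff (μ : YoungDiagram) (i : ℕ) : ℕ := ∑ i' ∈ Finset.range i, (μ.rowLen i' - 1)

lemma Qoff_succ (μ : YoungDiagram) (i : ℕ) : Qoff μ (i + 1) = Qoff μ i + (μ.rowLen i - 1) :=
  Finset.sum_range_succ _ _

lemma Qoff_mono (μ : YoungDiagram) {i i' : ℕ} (h : i ≤ i') : Qoff μ i ≤ Qoff μ i' :=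
  Finset.sum_le_sum_of_subset (Finset.range_subset_range.2 h)

def valH (μ : YoungDiagram) (Y : Finset ℕ) (i j : ℕ) : ℕ :=
  if j = 0 then
    (if i < μ.colLen 1 then i + 1 else sget Y (i - μ.colLen 1))
  else sget ((Finset.Ioc (μ.colLen 1) μ.card) \ Y) (Qoff μ i + (j - 1))

def fH (μ : YoungDiagram) (Y : Finset ℕ) (p : ℕ × ℕ) : ℕ :=
  if p ∈ μ then valH μ Y p.1 p.2 else 0

lemma valH_zero_lt (μ : YoungDiagram) (Y : Finset ℕ) {i : ℕ} (hil : i < μ.colLen 1) :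
    valH μ Y i 0 = i + 1 := by simp [valH, hil]

lemma valH_zero_ge (μ : YoungDiagram) (Y : Finset ℕ) {i : ℕ} (hil : ¬ i < μ.colLen 1) :
    valH μ Y i 0 = sget Y (i - μ.colLen 1) := by simp [valH, hil]

lemma valH_posj (μ : YoungDiagram) (Y : Finset ℕ) {i j : ℕ} (hj : ¬ j = 0) :
    valH μ Y i j = sget ((Finset.Ioc (μ.colLen 1) μ.card) \ Y) (Qoff μ i + (j - 1)) := by
  simp [valH, hj]

section Hmain
variable (μ : YoungDiagram)

lemma H_rowLen_one : ∀ i, μ.colLen 1 ≤ i → i < μ.colLen 0 → μ.rowLen i = 1 := by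
  intro i h1 h2
  have ha : (i, 0) ∈ μ := YoungDiagram.mem_iff_lt_colLen.2 h2
  have hb : (i, 1) ∉ μ := by
    intro hmem
    exact absurd (YoungDiagram.mem_iff_lt_colLen.1 hmem) (by omega)
  have h3 := YoungDiagram.mem_iff_lt_rowLen.1 ha
  have h4 : ¬ (1 < μ.rowLen i) := fun hc => hb (YoungDiagram.mem_iff_lt_rowLen.2 hc)
  omega

lemma H_rowLen_two : ∀ i, i < μ.colLen 1 → 2 ≤ μ.rowLen i := by
  intro i h1
  exact YoungDiagram.mem_iff_lt_rowLen.1 (YoungDiagram.mem_iff_lt_colLen.2 h1)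

lemma H_b_le_n : μ.colLen 0 ≤ μ.card := by
  rw [card_eq_sum_rowLen μ (μ.colLen 0) le_rfl]
  calc μ.colLen 0 = ∑ _i ∈ Finset.range (μ.colLen 0), 1 := by simp
    _ ≤ ∑ i ∈ Finset.range (μ.colLen 0), μ.rowLen i := by
        apply Finset.sum_le_sum
        intro i hi
        have := YoungDiagram.mem_iff_lt_colLen.2 (Finset.mem_range.1 hi)
        exact YoungDiagram.mem_iff_lt_rowLen.1 this

lemma H_Qoff_l : Qoff μ (μ.colLen 1) + (μ.colLen 0 - μ.colLen 1) + μ.colLen 1 = μ.card := by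
  have hlb : μ.colLen 1 ≤ μ.colLen 0 := μ.colLen_anti 0 1 (by omega)
  have hsum := card_eq_sum_rowLen μ (μ.colLen 0) le_rfl
  have hsplit : ∑ i ∈ Finset.range (μ.colLen 0), μ.rowLen i =
      (∑ i ∈ Finset.range (μ.colLen 1), μ.rowLen i) +
      (∑ i ∈ Finset.Ico (μ.colLen 1) (μ.colLen 0), μ.rowLen i) := by
    simp only [Finset.range_eq_Ico]
    exact (Finset.sum_Ico_consecutive _ (Nat.zero_le _) hlb).symm
  have h1 : ∑ i ∈ Finset.Ico (μ.colLen 1) (μ.colLen 0), μ.rowLen i =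
      μ.colLen 0 - μ.colLen 1 := by
    rw [Finset.sum_congr rfl (fun i hi => ?_), Finset.sum_const, Nat.card_Ico, smul_eq_mul,
      mul_one]
    obtain ⟨hi1, hi2⟩ := Finset.mem_Ico.1 hi
    exact H_rowLen_one μ i hi1 hi2
  have h2 : ∑ i ∈ Finset.range (μ.colLen 1), μ.rowLen i = Qoff μ (μ.colLen 1) + μ.colLen 1 := by
    unfold Qoff
    have hcongr : ∀ i ∈ Finset.range (μ.colLen 1), μ.rowLen i = (μ.rowLen i - 1) + 1 := by
      intro i hi
      have := H_rowLen_two μ i (Finset.mem_range.1 hi)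
      omega
    rw [Finset.sum_congr rfl hcongr, Finset.sum_add_distrib, Finset.sum_const, smul_eq_mul,
      mul_one, Finset.card_range]
  omega

variable (Y : Finset ℕ)

lemma H_Cs_card (hYs : Y ⊆ Finset.Ioc (μ.colLen 1) μ.card)
    (hYc : Y.card = μ.colLen 0 - μ.colLen 1) :
    ((Finset.Ioc (μ.colLen 1) μ.card) \ Y).card = Qoff μ (μ.colLen 1) := by
  rw [Finset.card_sdiff_of_subset hYs, Nat.card_Ioc, hYc]
  have h := H_Qoff_l μ
  have hlb : μ.colLen 1 ≤ μ.colLen 0 := μ.colLen_anti 0 1 (by omega)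
  have hbn := H_b_le_n μ
  omega

lemma H_row_lt {i j : ℕ} (hij : (i, j) ∈ μ) (hj : 1 ≤ j) : i < μ.colLen 1 := by
  have h1 : (i, 1) ∈ μ := μ.up_left_mem le_rfl hj hij
  exact YoungDiagram.mem_iff_lt_colLen.1 h1

lemma H_idx_lt {i j : ℕ} (hij : (i, j) ∈ μ) (hj : 1 ≤ j) :
    Qoff μ i + (j - 1) < Qoff μ (μ.colLen 1) := by
  have hil : i < μ.colLen 1 := H_row_lt μ hij hj
  have hlen : j < μ.rowLen i := YoungDiagram.mem_iff_lt_rowLen.1 hij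
  have h2 : 2 ≤ μ.rowLen i := H_rowLen_two μ i hil
  have hs := Qoff_succ μ i
  have hm : Qoff μ (i + 1) ≤ Qoff μ (μ.colLen 1) := Qoff_mono μ (by omega)
  omega

lemma H_idx_sep {i j i' j' : ℕ} (hij : (i, j) ∈ μ) (hj : 1 ≤ j) (hj' : 1 ≤ j')
    (hii : i < i') : Qoff μ i + (j - 1) < Qoff μ i' + (j' - 1) := by
  have hil : i < μ.colLen 1 := H_row_lt μ hij hj
  have hlen : j < μ.rowLen i := YoungDiagram.mem_iff_lt_rowLen.1 hij
  have h2 : 2 ≤ μ.rowLen i := H_rowLen_two μ i hil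
  have hs := Qoff_succ μ i
  have hm : Qoff μ (i + 1) ≤ Qoff μ i' := Qoff_mono μ (by omega)
  omega

lemma H_val_cs {i j : ℕ} (hij : (i, j) ∈ μ) (hj : 1 ≤ j)
    (hYs : Y ⊆ Finset.Ioc (μ.colLen 1) μ.card)
    (hYc : Y.card = μ.colLen 0 - μ.colLen 1) :
    valH μ Y i j ∈ (Finset.Ioc (μ.colLen 1) μ.card) \ Y := by
  have hj0 : ¬ j = 0 := by omega
  simp only [valH, if_neg hj0]
  apply sget_mem
  rw [H_Cs_card μ Y hYs hYc]
  exact H_idx_lt μ hij hj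

lemma H_val_y {i : ℕ} (hi : (i, 0) ∈ μ) (hil : ¬ i < μ.colLen 1)
    (hYc : Y.card = μ.colLen 0 - μ.colLen 1) :
    valH μ Y i 0 ∈ Y := by
  simp only [valH, if_pos rfl, if_neg hil]
  apply sget_mem
  have hb : i < μ.colLen 0 := YoungDiagram.mem_iff_lt_colLen.1 hi
  omega

lemma isSYT_fH (hYs : Y ⊆ Finset.Ioc (μ.colLen 1) μ.card)
    (hYc : Y.card = μ.colLen 0 - μ.colLen 1) :
    IsSYT μ (fH μ Y) := by
  have hbn := H_b_le_n μ
  have hlb : μ.colLen 1 ≤ μ.colLen 0 := μ.colLen_anti 0 1 (by omega)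
  have hCc := H_Cs_card μ Y hYs hYc
  have hmem : ∀ p : ℕ × ℕ, p ∈ μ → fH μ Y p = valH μ Y p.1 p.2 := by
    intro p hp; simp [fH, hp]
  -- strict increase along a row
  have hrow : ∀ i j j', (i, j') ∈ μ → j < j' → valH μ Y i j < valH μ Y i j' := by
    intro i j j' hij' hjj
    have hj'1 : 1 ≤ j' := by omega
    have hcs := H_val_cs μ Y hij' hj'1 hYs hYc
    rw [Finset.mem_sdiff, Finset.mem_Ioc] at hcs
    rcases Nat.eq_zero_or_pos j with hj0 | hj0
    · subst hj0
      have hil : i < μ.colLen 1 := H_row_lt μ hij' hj'1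
      rw [valH_zero_lt μ Y hil]
      omega
    · have hj0' : ¬ j = 0 := by omega
      have hj0'' : ¬ j' = 0 := by omega
      rw [valH_posj μ Y hj0', valH_posj μ Y hj0'']
      apply sget_lt
      · omega
      · rw [hCc]; exact H_idx_lt μ hij' hj'1
  -- strict increase along a column
  have hcol : ∀ i i' j, (i, j) ∈ μ → (i', j) ∈ μ → i < i' → valH μ Y i j < valH μ Y i' j := by
    intro i i' j hij hij' hii
    rcases Nat.eq_zero_or_pos j with hj0 | hj0
    · subst hj0
      by_cases hil' : i' < μ.colLen 1
      · have hil : i < μ.colLen 1 := by omega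
        rw [valH_zero_lt μ Y hil, valH_zero_lt μ Y hil']
        omega
      · have hy' := H_val_y μ Y hij' hil' hYc
        have hy'2 := hYs hy'
        rw [Finset.mem_Ioc] at hy'2
        by_cases hil : i < μ.colLen 1
        · rw [valH_zero_lt μ Y hil]
          omega
        · rw [valH_zero_ge μ Y hil, valH_zero_ge μ Y hil']
          apply sget_lt
          · omega
          · have hb : i' < μ.colLen 0 := YoungDiagram.mem_iff_lt_colLen.1 hij'
            omega
    · have hj0' : ¬ j = 0 := by omega
      rw [valH_posj μ Y hj0', valH_posj μ Y hj0']
      apply sget_lt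
      · exact H_idx_sep μ hij hj0 hj0 hii
      · rw [hCc]; exact H_idx_lt μ hij' hj0
  have hinj : Set.InjOn (fH μ Y) ↑μ.cells := by
    intro p hp q hq hfpq
    have hp' : (p.1, p.2) ∈ μ := by simpa using hp
    have hq' : (q.1, q.2) ∈ μ := by simpa using hq
    rw [hmem p (by simpa using hp), hmem q (by simpa using hq)] at hfpq
    rcases Nat.eq_zero_or_pos p.2 with hp2 | hp2 <;> rcases Nat.eq_zero_or_pos q.2 with hq2 | hq2
    · -- both in column 0
      rcases lt_trichotomy p.1 q.1 with h | h | h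
      · have := hcol p.1 q.1 0 (by rwa [← hp2]) (by rwa [← hq2]) h
        rw [hp2, hq2] at hfpq; omega
      · exact Prod.ext h (by omega)
      · have := hcol q.1 p.1 0 (by rwa [← hq2]) (by rwa [← hp2]) h
        rw [hp2, hq2] at hfpq; omega
    · -- p in column 0, q not
      exfalso
      have hq3 := H_val_cs μ Y hq' hq2 hYs hYc
      rw [Finset.mem_sdiff, Finset.mem_Ioc] at hq3
      by_cases hil : p.1 < μ.colLen 1
      · rw [hp2] at hfpq
        rw [valH_zero_lt μ Y hil] at hfpq
        omega
      · have hy := H_val_y μ Y (by rwa [← hp2]) hil hYc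
        rw [hp2] at hfpq
        rw [hfpq] at hy
        exact hq3.2 hy
    · -- q in column 0, p not
      exfalso
      have hp3 := H_val_cs μ Y hp' hp2 hYs hYc
      rw [Finset.mem_sdiff, Finset.mem_Ioc] at hp3
      by_cases hil : q.1 < μ.colLen 1
      · rw [hq2] at hfpq
        rw [valH_zero_lt μ Y hil] at hfpq
        omega
      · have hy := H_val_y μ Y (by rwa [← hq2]) hil hYc
        rw [hq2] at hfpq
        rw [← hfpq] at hy
        exact hp3.2 hy
    · -- both j ≥ 1
      have hp0 : ¬ p.2 = 0 := by omega
      have hq0 : ¬ q.2 = 0 := by omega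
      rw [valH_posj μ Y hp0, valH_posj μ Y hq0] at hfpq
      rcases lt_trichotomy p.1 q.1 with h | h | h
      · exfalso
        have hsep := H_idx_sep μ hp' hp2 hq2 h
        have := sget_lt ((Finset.Ioc (μ.colLen 1) μ.card) \ Y) hsep
          (by rw [hCc]; exact H_idx_lt μ hq' hq2)
        omega
      · rcases lt_trichotomy p.2 q.2 with h2 | h2 | h2
        · exfalso
          have := sget_lt ((Finset.Ioc (μ.colLen 1) μ.card) \ Y)
            (show Qoff μ p.1 + (p.2 - 1) < Qoff μ q.1 + (q.2 - 1) by rw [h]; omega)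
            (by rw [hCc]; exact H_idx_lt μ hq' hq2)
          omega
        · exact Prod.ext h h2
        · exfalso
          have := sget_lt ((Finset.Ioc (μ.colLen 1) μ.card) \ Y)
            (show Qoff μ q.1 + (q.2 - 1) < Qoff μ p.1 + (p.2 - 1) by rw [h]; omega)
            (by rw [hCc]; exact H_idx_lt μ hp' hp2)
          omega
      · exfalso
        have hsep := H_idx_sep μ hq' hq2 hp2 h
        have := sget_lt ((Finset.Ioc (μ.colLen 1) μ.card) \ Y) hsep
          (by rw [hCc]; exact H_idx_lt μ hp' hp2)
        omega
  refine ⟨?_, ?_, ?_, ?_⟩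
  · apply bijOn_of_injOn μ (fH μ Y) ?_ hinj
    intro p hp
    rw [Finset.mem_Icc, hmem p hp]
    have hp' : (p.1, p.2) ∈ μ := by simpa using hp
    rcases Nat.eq_zero_or_pos p.2 with hp2 | hp2
    · by_cases hil : p.1 < μ.colLen 1
      · rw [hp2, valH_zero_lt μ Y hil]
        omega
      · have hy := H_val_y μ Y (by rwa [← hp2]) hil hYc
        have := hYs hy
        rw [Finset.mem_Ioc] at this
        rw [hp2]
        omega
    · have hcs := H_val_cs μ Y hp' hp2 hYs hYc
      rw [Finset.mem_sdiff, Finset.mem_Ioc] at hcs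
      omega
  · intro p hp; simp [fH, hp]
  · intro p q hp hq h1 h2
    rw [hmem p hp, hmem q hq, h1]
    exact hrow q.1 p.2 q.2 (by simpa using hq) h2
  · intro p q hp hq h1 h2
    rw [hmem p hp, hmem q hq, ← h1]
    exact hcol p.1 q.1 p.2 (by simpa using hp) (by rw [h1]; simpa using hq) h2

end Hmain

lemma H_bound (μ : YoungDiagram) :
    (μ.card - μ.colLen 1).choose (μ.colLen 0 - μ.colLen 1) ≤ sytCount μ := by
  classical
  have hbn := H_b_le_n μ
  have hlb : μ.colLen 1 ≤ μ.colLen 0 := μ.colLen_anti 0 1 (by omega)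
  set l := μ.colLen 1 with hl
  set b := μ.colLen 0 with hb
  set n := μ.card with hn
  have hYfact : ∀ Y : Finset ℕ, Y ∈ (Finset.Ioc l n).powersetCard (b - l) →
      Y ⊆ Finset.Ioc l n ∧ Y.card = b - l := by
    intro Y hY
    exact Finset.mem_powersetCard.1 hY
  let Φ : {Y // Y ∈ (Finset.Ioc l n).powersetCard (b - l)} → {f // IsSYT μ f} :=
    fun Y => ⟨fH μ Y.1, isSYT_fH μ Y.1 (hYfact Y.1 Y.2).1 (hYfact Y.1 Y.2).2⟩
  have himg : ∀ Y : Finset ℕ, Y ⊆ Finset.Ioc l n → Y.card = b - l →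
      (Finset.Ico l b).image (fun i => fH μ Y (i, 0)) = Y := by
    intro Y hYs hYc
    ext y
    constructor
    · intro hy
      obtain ⟨i, hi, rfl⟩ := Finset.mem_image.1 hy
      obtain ⟨hi1, hi2⟩ := Finset.mem_Ico.1 hi
      have hcell : (i, 0) ∈ μ := YoungDiagram.mem_iff_lt_colLen.2 hi2
      have : fH μ Y (i, 0) = valH μ Y i 0 := by simp [fH, hcell]
      rw [this]
      exact H_val_y μ Y hcell (by omega) hYc
    · intro hy
      obtain ⟨m, hm, hsg⟩ := sget_surj Y hy
      refine Finset.mem_image.2 ⟨l + m, Finset.mem_Ico.2 ⟨by omega, by omega⟩, ?_⟩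
      have hcell : (l + m, 0) ∈ μ := YoungDiagram.mem_iff_lt_colLen.2 (by omega)
      have h1 : fH μ Y (l + m, 0) = valH μ Y (l + m) 0 := by simp [fH, hcell]
      rw [h1, valH_zero_ge μ Y (show ¬ l + m < l by omega)]
      rw [show l + m - l = m by omega]
      exact hsg
  have hΦ : Function.Injective Φ := by
    rintro ⟨Y, hY⟩ ⟨Y', hY'⟩ h
    have hfun : fH μ Y = fH μ Y' := congrArg Subtype.val h
    apply Subtype.ext
    show Y = Y'
    rw [← himg Y (hYfact Y hY).1 (hYfact Y hY).2,
      ← himg Y' (hYfact Y' hY').1 (hYfact Y' hY').2, hfun]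
  have hcard := card_le_sytCount Φ hΦ
  rw [nat_card_coe', Finset.card_powersetCard, Nat.card_Ioc] at hcard
  exact hcard


lemma choose_two_mul (m : ℕ) : m.choose 2 * 2 = m * (m - 1) := by
  rcases Nat.even_or_odd m with ⟨t, ht⟩ | ⟨t, ht⟩
  · rw [Nat.choose_two_right]
    apply Nat.div_mul_cancel
    exact ⟨t * (m - 1), by rw [ht]; ring⟩
  · rw [Nat.choose_two_right]
    apply Nat.div_mul_cancel
    have h1 : m - 1 = 2 * t := by omega
    exact ⟨m * t, by rw [h1]; ring⟩

/-! ### structural exclusion lemmas -/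

lemma sum_split_row0 (μ : YoungDiagram) (hb : 1 ≤ μ.colLen 0) :
    μ.card = μ.rowLen 0 + ∑ i ∈ Finset.Ico 1 (μ.colLen 0), μ.rowLen i := by
  have hsum := card_eq_sum_rowLen μ (μ.colLen 0) le_rfl
  have hsplit := Finset.sum_Ico_consecutive (fun i => μ.rowLen i)
    (show 0 ≤ 1 by omega) hb
  rw [hsum, Finset.range_eq_Ico, ← hsplit]
  congr 1

lemma tail_ones (μ : YoungDiagram) (hl : μ.colLen 1 = 1) :
    ∑ i ∈ Finset.Ico 1 (μ.colLen 0), μ.rowLen i = μ.colLen 0 - 1 := by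
  rw [Finset.sum_congr rfl (fun i hi => ?_), Finset.sum_const, Nat.card_Ico, smul_eq_mul, mul_one]
  obtain ⟨hi1, hi2⟩ := Finset.mem_Ico.1 hi
  exact H_rowLen_one μ i (by omega) hi2

lemma tail_ge (μ : YoungDiagram) :
    μ.colLen 0 - 1 ≤ ∑ i ∈ Finset.Ico 1 (μ.colLen 0), μ.rowLen i := by
  calc μ.colLen 0 - 1 = ∑ _i ∈ Finset.Ico 1 (μ.colLen 0), 1 := by
        rw [Finset.sum_const, Nat.card_Ico, smul_eq_mul, mul_one]
    _ ≤ ∑ i ∈ Finset.Ico 1 (μ.colLen 0), μ.rowLen i := by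
        apply Finset.sum_le_sum
        intro i hi
        obtain ⟨_, hi2⟩ := Finset.mem_Ico.1 hi
        have := YoungDiagram.mem_iff_lt_colLen.2 hi2
        exact YoungDiagram.mem_iff_lt_rowLen.1 this

lemma excl_b2 (μ : YoungDiagram) (n : ℕ) (hcard : μ.card = n) (hn : 1 ≤ n)
    (h1 : μ.rowLens ≠ [n]) : 2 ≤ μ.colLen 0 := by
  by_contra hb
  push_neg at hb
  have hcase : μ.colLen 0 = 0 ∨ μ.colLen 0 = 1 := by omega
  rcases hcase with hc | hc
  · have h0 := card_eq_sum_rowLen μ 0 (by omega)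
    rw [Finset.sum_range_zero] at h0
    omega
  · have hsum := card_eq_sum_rowLen μ 1 (by omega)
    rw [Finset.sum_range_one] at hsum
    apply h1
    have hr : μ.rowLens = [μ.rowLen 0] := by
      rw [YoungDiagram.rowLens, hc]
      simp [List.range_succ]
    rw [hr]
    congr 1
    omega

lemma excl_l1 (μ : YoungDiagram) (n : ℕ) (hcard : μ.card = n) (hn : 1 ≤ n)
    (h2 : μ.rowLens ≠ List.replicate n 1) : 1 ≤ μ.colLen 1 := by
  by_contra hl
  push_neg at hl
  have hl0 : μ.colLen 1 = 0 := by omega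
  have hrow1 : ∀ i, i < μ.colLen 0 → μ.rowLen i = 1 := by
    intro i hi
    exact H_rowLen_one μ i (by omega) hi
  have hsum := card_eq_sum_rowLen μ (μ.colLen 0) le_rfl
  have hsum1 : μ.card = μ.colLen 0 := by
    rw [hsum, Finset.sum_congr rfl (fun i hi => hrow1 i (Finset.mem_range.1 hi))]
    simp
  apply h2
  rw [YoungDiagram.rowLens]
  have hn' : n = μ.colLen 0 := by omega
  rw [hn']
  apply List.ext_getElem
  · simp
  · intro i hi1 hi2
    rw [List.getElem_map, List.getElem_range, List.getElem_replicate]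
    exact hrow1 i (by simpa using hi1)

lemma excl_a (μ : YoungDiagram) (n : ℕ) (hcard : μ.card = n) (hn : 3 ≤ n)
    (hb1 : 2 ≤ μ.colLen 0) (h3 : μ.rowLens ≠ [n - 1, 1]) : μ.rowLen 0 ≤ n - 2 := by
  by_contra hA
  push_neg at hA
  have hs0 := sum_split_row0 μ (by omega)
  have htg := tail_ge μ
  have hb2 : μ.colLen 0 = 2 := by omega
  have ha : μ.rowLen 0 = n - 1 := by omega
  have hsum2 := card_eq_sum_rowLen μ 2 (by omega)
  rw [Finset.sum_range_succ, Finset.sum_range_one] at hsum2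
  have hr1 : μ.rowLen 1 = 1 := by omega
  apply h3
  have hr : μ.rowLens = [μ.rowLen 0, μ.rowLen 1] := by
    rw [YoungDiagram.rowLens, hb2]
    simp [List.range_succ]
  rw [hr, ha, hr1]

lemma excl_hook (μ : YoungDiagram) (n : ℕ) (hcard : μ.card = n) (hn : 3 ≤ n)
    (h4 : μ.rowLens ≠ 2 :: List.replicate (n - 2) 1) (hl : μ.colLen 1 = 1) :
    3 ≤ μ.rowLen 0 := by
  have ha2 : 2 ≤ μ.rowLen 0 := by
    have : (0, 1) ∈ μ := YoungDiagram.mem_iff_lt_colLen.2 (by omega)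
    exact YoungDiagram.mem_iff_lt_rowLen.1 this
  by_contra hA
  push_neg at hA
  have ha : μ.rowLen 0 = 2 := by omega
  have hba : μ.colLen 1 ≤ μ.colLen 0 := μ.colLen_anti 0 1 (by omega)
  have hs0 := sum_split_row0 μ (by omega)
  have ht1 := tail_ones μ hl
  have hb : μ.colLen 0 = n - 1 := by omega
  apply h4
  apply List.ext_getElem
  · rw [YoungDiagram.rowLens]
    simp
    omega
  · intro i h1 h2
    rw [YoungDiagram.get_rowLens]
    match i with
    | 0 => simpa using ha
    | (m+1) =>
      rw [List.getElem_cons_succ, List.getElem_replicate]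
      have him : m + 1 < μ.colLen 0 := by
        rw [YoungDiagram.rowLens] at h1
        simpa using h1
      exact H_rowLen_one μ (m+1) (by omega) him

end SYT5

/-- For `n ≥ 400`, every irreducible representation of `S_n` has dimension `> n²/3`,
except the trivial representation (the single-row partition `(n)`), the sign representation
(the single-column partition `(1^n)`), the standard representation (partition `(n-1,1)`),
and its conjugate (partition `(2,1^{n-2})`). Dimensions are counted as numbers of
standard Young tableaux. -/
theorem stmt5 (n : ℕ) (hn : 400 ≤ n) (μ : YoungDiagram) (hcard : μ.card = n)
    (h1 : μ.rowLens ≠ [n])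
    (h2 : μ.rowLens ≠ List.replicate n 1)
    (h3 : μ.rowLens ≠ [n - 1, 1])
    (h4 : μ.rowLens ≠ 2 :: List.replicate (n - 2) 1) :
    (n ^ 2 : ℚ) / 3 < (sytCount μ : ℚ) := by
  classical
  have hn3 : 3 ≤ n := by omega
  have hb1 : 2 ≤ μ.colLen 0 := SYT5.excl_b2 μ n hcard (by omega) h1
  have hl1 : 1 ≤ μ.colLen 1 := SYT5.excl_l1 μ n hcard (by omega) h2
  have ha2 : μ.rowLen 0 ≤ n - 2 := SYT5.excl_a μ n hcard hn3 hb1 h3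
  have hak : μ.rowLen 1 ≤ μ.rowLen 0 := μ.rowLen_anti 0 1 (by omega)
  have hlb : μ.colLen 1 ≤ μ.colLen 0 := μ.colLen_anti 0 1 (by omega)
  have hlog := SYT5.twelve_log_le n hn
  suffices hmain : n ^ 2 < 3 * sytCount μ by
    rw [div_lt_iff₀ (by norm_num : (0:ℚ) < 3)]
    have h' : n ^ 2 < sytCount μ * 3 := by linarith
    exact_mod_cast h'
  by_cases hI : 2 * Nat.log 2 n + 6 ≤ μ.rowLen 1
  · -- Case I : second row very long
    have hB := SYT5.B_bound μ (2 * Nat.log 2 n + 4) (by omega) (by omega) (by omega)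
    have hns := SYT5.nsq_lt_pow n (by omega)
    have hK1 : 2 * Nat.log 2 n + 4 - 1 = 2 * Nat.log 2 n + 3 := by omega
    rw [hK1] at hB
    linarith
  by_cases hII : 2 * Nat.log 2 n + 6 ≤ μ.colLen 1
  · -- Case II : second column very long
    have h1t : 2 * Nat.log 2 n + 4 ≤ μ.transpose.rowLen 1 := by
      rw [YoungDiagram.rowLen_transpose]; omega
    have h2t : 2 * Nat.log 2 n + 4 < μ.transpose.rowLen 0 := by
      rw [YoungDiagram.rowLen_transpose]; omega
    have hB := SYT5.B_bound μ.transpose (2 * Nat.log 2 n + 4) (by omega) h1t h2t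
    rw [SYT5.sytCount_transpose] at hB
    have hns := SYT5.nsq_lt_pow n (by omega)
    have hK1 : 2 * Nat.log 2 n + 4 - 1 = 2 * Nat.log 2 n + 3 := by omega
    rw [hK1] at hB
    linarith
  push_neg at hI hII
  have hq := SYT5.main_quad n hn
  have hc2 := SYT5.choose_two_mul (n - (2 * Nat.log 2 n + 5))
  by_cases hIII : 2 ≤ μ.colLen 0 - μ.colLen 1
  · -- Case III : at least two singleton rows
    have hH := SYT5.H_bound μ
    rw [hcard] at hH
    have hQl := SYT5.H_Qoff_l μ
    rw [hcard] at hQl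
    have q1 : SYT5.Qoff μ 1 = μ.rowLen 0 - 1 := by
      simp [SYT5.Qoff, Finset.sum_range_one]
    have hQgap : 2 ≤ SYT5.Qoff μ (μ.colLen 1) := by
      by_cases hl2 : 2 ≤ μ.colLen 1
      · have q2 : SYT5.Qoff μ 2 = (μ.rowLen 0 - 1) + (μ.rowLen 1 - 1) := by
          simp [SYT5.Qoff, Finset.sum_range_succ]
        have hmono2 : SYT5.Qoff μ 2 ≤ SYT5.Qoff μ (μ.colLen 1) := SYT5.Qoff_mono μ hl2
        have hr0 : 2 ≤ μ.rowLen 0 := SYT5.H_rowLen_two μ 0 (by omega)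
        have hr1 : 2 ≤ μ.rowLen 1 := SYT5.H_rowLen_two μ 1 (by omega)
        omega
      · have hl1' : μ.colLen 1 = 1 := by omega
        have ha3 := SYT5.excl_hook μ n hcard hn3 h4 hl1'
        rw [hl1']
        omega
    have hs2 : (μ.colLen 0 - μ.colLen 1) + 2 ≤ n - μ.colLen 1 := by omega
    have hmono := SYT5.choose_two_le_choose (n - μ.colLen 1) (μ.colLen 0 - μ.colLen 1) hIII hs2
    have htop : (n - (2 * Nat.log 2 n + 5)).choose 2 ≤ (n - μ.colLen 1).choose 2 :=
      Nat.choose_le_choose 2 (by omega)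
    linarith
  by_cases hIV : 2 ≤ μ.rowLen 0 - μ.rowLen 1
  · -- Case IV : at least two singleton columns
    have hH := SYT5.H_bound μ.transpose
    rw [SYT5.sytCount_transpose, SYT5.card_transpose, hcard] at hH
    simp only [YoungDiagram.colLen_transpose] at hH
    have hs2 : (μ.rowLen 0 - μ.rowLen 1) + 2 ≤ n - μ.rowLen 1 := by omega
    have hmono := SYT5.choose_two_le_choose (n - μ.rowLen 1) (μ.rowLen 0 - μ.rowLen 1) hIV hs2
    have htop : (n - (2 * Nat.log 2 n + 5)).choose 2 ≤ (n - μ.rowLen 1).choose 2 :=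
      Nat.choose_le_choose 2 (by omega)
    linarith
  -- Case V : almost rectangular
  push_neg at hIII hIV
  have hab := SYT5.card_le_mul μ
  rw [hcard] at hab
  by_cases hba : μ.colLen 0 ≤ μ.rowLen 0
  · have hn_aa : n ≤ μ.rowLen 0 * μ.rowLen 0 :=
      le_trans hab (Nat.mul_le_mul_left _ hba)
    have h20 : 20 ≤ μ.rowLen 0 := by
      by_contra hc
      push_neg at hc
      have : μ.rowLen 0 * μ.rowLen 0 ≤ 19 * 19 := Nat.mul_le_mul (by omega) (by omega)
      omega
    have hB := SYT5.B_bound μ (μ.rowLen 0 - 1) (by omega) (by omega) (by omega)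
    have hp4 := SYT5.pow4_lt (μ.rowLen 0) h20
    have hnsq : n ^ 2 ≤ μ.rowLen 0 ^ 4 := by
      calc n ^ 2 ≤ (μ.rowLen 0 * μ.rowLen 0) ^ 2 := Nat.pow_le_pow_left hn_aa 2
        _ = μ.rowLen 0 ^ 4 := by ring
    have hK : μ.rowLen 0 - 1 - 1 = μ.rowLen 0 - 2 := by omega
    rw [hK] at hB
    linarith
  · push_neg at hba
    have hn_bb : n ≤ μ.colLen 0 * μ.colLen 0 :=
      le_trans hab (Nat.mul_le_mul_right _ (by omega))
    have h20 : 20 ≤ μ.colLen 0 := by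
      by_contra hc
      push_neg at hc
      have : μ.colLen 0 * μ.colLen 0 ≤ 19 * 19 := Nat.mul_le_mul (by omega) (by omega)
      omega
    have h1t : μ.colLen 0 - 1 ≤ μ.transpose.rowLen 1 := by
      rw [YoungDiagram.rowLen_transpose]; omega
    have h2t : μ.colLen 0 - 1 < μ.transpose.rowLen 0 := by
      rw [YoungDiagram.rowLen_transpose]; omega
    have hB := SYT5.B_bound μ.transpose (μ.colLen 0 - 1) (by omega) h1t h2t
    rw [SYT5.sytCount_transpose] at hB
    have hp4 := SYT5.pow4_lt (μ.colLen 0) h20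
    have hnsq : n ^ 2 ≤ μ.colLen 0 ^ 4 := by
      calc n ^ 2 ≤ (μ.colLen 0 * μ.colLen 0) ^ 2 := Nat.pow_le_pow_left hn_bb 2
        _ = μ.colLen 0 ^ 4 := by ring
    have hK : μ.colLen 0 - 1 - 1 = μ.colLen 0 - 2 := by omega
    rw [hK] at hB
    linarith
end

section
/- For all integers n ≥ 1: √(2π) · n^{n+1/2} · e^{−n + 1/(12n+1)} < n! < √(2π) · n^{n+1/2} · e^{−n + 1/(12n)}. -/
open Real

section RobbinsAux
open Filter Topology


lemma artanh_lb {t : ℝ} (h0 : 0 < t) (h1 : t < 1) :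
    2*t + 2*t^3/3 < Real.log (1+t) - Real.log (1-t) := by
  set g : ℝ → ℝ := fun x => Real.log (1+x) - Real.log (1-x) - 2*x - 2*x^3/3 with hg
  have key : StrictMonoOn g (Set.Icc 0 t) := by
    apply strictMonoOn_of_deriv_pos (convex_Icc 0 t)
    · apply ContinuousOn.sub
      apply ContinuousOn.sub
      apply ContinuousOn.sub
      · exact (continuousOn_const.add continuousOn_id).log
          (fun x hx => ne_of_gt (by simp only [Pi.add_apply, Pi.sub_apply, id_eq]; nlinarith [hx.1, hx.2, h1]))
      · exact (continuousOn_const.sub continuousOn_id).log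
          (fun x hx => ne_of_gt (by simp only [Pi.add_apply, Pi.sub_apply, id_eq]; nlinarith [hx.1, hx.2, h1]))
      · fun_prop
      · fun_prop
    · intro x hx
      rw [interior_Icc] at hx
      have hx0 := hx.1
      have hx1 : x < 1 := lt_of_lt_of_le hx.2 h1.le
      have d1 : HasDerivAt (fun x : ℝ => Real.log (1+x)) (1/(1+x)) x := by
        have : HasDerivAt (fun x : ℝ => 1+x) 1 x := (hasDerivAt_id x).const_add 1
        simpa using this.log (by nlinarith)
      have d2 : HasDerivAt (fun x : ℝ => Real.log (1-x)) (-1/(1-x)) x := by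
        have : HasDerivAt (fun x : ℝ => 1-x) (-1) x := (hasDerivAt_id x).const_sub 1
        simpa using this.log (by nlinarith)
      have d3 : HasDerivAt g (1/(1+x) - (-1/(1-x)) - 2 - 2*(3*x^2)/3) x := by
        refine HasDerivAt.sub (HasDerivAt.sub (d1.sub d2) ?_) ?_
        · simpa using (hasDerivAt_id x).const_mul 2
        · have : HasDerivAt (fun x : ℝ => x^3) (3*x^2) x := by
            simpa using hasDerivAt_pow 3 x
          simpa [mul_div_assoc] using (this.const_mul 2).div_const 3
      rw [d3.deriv]
      have h1x : (0:ℝ) < 1 - x := by linarith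
      have h2x : (0:ℝ) < 1 + x := by linarith
      rw [show 1/(1+x) - (-1/(1-x)) - 2 - 2*(3*x^2)/3 = 2*x^4/((1+x)*(1-x)) by
        field_simp; ring]
      positivity
  have := key (Set.left_mem_Icc.2 h0.le) (Set.right_mem_Icc.2 h0.le) h0
  simp only [hg] at this
  simp at this
  linarith [this]

lemma artanh_ub {t : ℝ} (h0 : 0 < t) (h1 : t < 1) :
    Real.log (1+t) - Real.log (1-t) < 2*t + 2*t^3/(3*(1-t^2)) := by
  set g : ℝ → ℝ := fun x => 2*x + 2*x^3/(3*(1-x^2)) - (Real.log (1+x) - Real.log (1-x)) with hg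
  have key : StrictMonoOn g (Set.Icc 0 t) := by
    apply strictMonoOn_of_deriv_pos (convex_Icc 0 t)
    · apply ContinuousOn.sub
      · apply ContinuousOn.add
        · fun_prop
        · apply ContinuousOn.div
          · fun_prop
          · fun_prop
          · intro x hx
            have := hx.1; have := hx.2
            nlinarith [hx.1, hx.2]
      · apply ContinuousOn.sub
        · exact (continuousOn_const.add continuousOn_id).log
            (fun x hx => ne_of_gt (by simp only [Pi.add_apply, Pi.sub_apply, id_eq]; nlinarith [hx.1, hx.2, h1]))
        · exact (continuousOn_const.sub continuousOn_id).log
            (fun x hx => ne_of_gt (by simp only [Pi.add_apply, Pi.sub_apply, id_eq]; nlinarith [hx.1, hx.2, h1]))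
    · intro x hx
      rw [interior_Icc] at hx
      have hx0 := hx.1
      have hx1 : x < 1 := lt_of_lt_of_le hx.2 h1.le
      have h1x : (0:ℝ) < 1 - x := by linarith
      have h2x : (0:ℝ) < 1 + x := by linarith
      have hden : 3*(1-x^2) ≠ 0 := by nlinarith
      have d1 : HasDerivAt (fun x : ℝ => Real.log (1+x)) (1/(1+x)) x := by
        have : HasDerivAt (fun x : ℝ => 1+x) 1 x := (hasDerivAt_id x).const_add 1
        simpa using this.log (by nlinarith)
      have d2 : HasDerivAt (fun x : ℝ => Real.log (1-x)) (-1/(1-x)) x := by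
        have : HasDerivAt (fun x : ℝ => 1-x) (-1) x := (hasDerivAt_id x).const_sub 1
        simpa using this.log (by nlinarith)
      have dnum : HasDerivAt (fun x : ℝ => 2*x^3) (2*(3*x^2)) x := by
        have : HasDerivAt (fun x : ℝ => x^3) (3*x^2) x := by simpa using hasDerivAt_pow 3 x
        exact this.const_mul 2
      have dden : HasDerivAt (fun x : ℝ => 3*(1-x^2)) (3*(-(2*x))) x := by
        have : HasDerivAt (fun x : ℝ => 1-x^2) (-(2*x)) x := by
          have h : HasDerivAt (fun x : ℝ => x^2) (2*x) x := by simpa using hasDerivAt_pow 2 x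
          simpa using h.const_sub 1
        exact this.const_mul 3
      have dfrac : HasDerivAt (fun x : ℝ => 2*x^3/(3*(1-x^2)))
          ((2*(3*x^2)*(3*(1-x^2)) - 2*x^3*(3*(-(2*x))))/(3*(1-x^2))^2) x :=
        dnum.div dden hden
      have d3 : HasDerivAt g (2*1 + (2*(3*x^2)*(3*(1-x^2)) - 2*x^3*(3*(-(2*x))))/(3*(1-x^2))^2
          - (1/(1+x) - (-1/(1-x)))) x := by
        refine HasDerivAt.sub (HasDerivAt.add ?_ dfrac) (d1.sub d2)
        simpa using (hasDerivAt_id x).const_mul 2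
      rw [d3.deriv]
      rw [show 2*1 + (2*(3*x^2)*(3*(1-x^2)) - 2*x^3*(3*(-(2*x))))/(3*(1-x^2))^2
          - (1/(1+x) - (-1/(1-x))) = 4*x^4/(3*((1+x)*(1-x))^2) by
        have hden' : (1:ℝ) - x^2 ≠ 0 := (by nlinarith : (0:ℝ) < 1 - x^2).ne'
        field_simp; ring]
      positivity
  have := key (Set.left_mem_Icc.2 h0.le) (Set.right_mem_Icc.2 h0.le) h0
  simp only [hg] at this
  simp at this
  linarith [this]


noncomputable def fR (n : ℕ) : ℝ :=
  Real.log (Nat.factorial n) - ((n:ℝ) + 1/2) * Real.log n + n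

lemma exp_fR (n : ℕ) (hn : 1 ≤ n) :
    Real.exp (fR n) = Real.sqrt 2 * Stirling.stirlingSeq n := by
  obtain ⟨m, rfl⟩ := Nat.exists_eq_add_of_le hn
  have hpos : 0 < Stirling.stirlingSeq (1 + m) := by
    rw [add_comm]; exact Stirling.stirlingSeq'_pos m
  have hn0 : (0:ℝ) < ((1+m : ℕ):ℝ) := by positivity
  rw [← Real.exp_log (show (0:ℝ) < Real.sqrt 2 * Stirling.stirlingSeq (1+m) by positivity)]
  congr 1
  rw [Real.log_mul (by positivity) hpos.ne', Stirling.log_stirlingSeq_formula, fR]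
  rw [Real.log_div hn0.ne' (Real.exp_ne_zero 1), Real.log_exp,
    Real.log_mul (by norm_num) hn0.ne', Real.log_sqrt (by norm_num)]
  ring

lemma tendsto_fR : Tendsto fR atTop (𝓝 (Real.log (Real.sqrt (2 * Real.pi)))) := by
  have h1 : Tendsto (fun n => Real.sqrt 2 * Stirling.stirlingSeq n) atTop
      (𝓝 (Real.sqrt 2 * Real.sqrt Real.pi)) :=
    Stirling.tendsto_stirlingSeq_sqrt_pi.const_mul _
  have h2 : Tendsto (fun n => Real.exp (fR n)) atTop (𝓝 (Real.sqrt (2 * Real.pi))) := by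
    rw [Real.sqrt_mul (by norm_num)]
    apply h1.congr'
    filter_upwards [eventually_ge_atTop 1] with n hn
    exact (exp_fR n hn).symm
  have h3 : Tendsto (fun n => Real.log (Real.exp (fR n))) atTop
      (𝓝 (Real.log (Real.sqrt (2 * Real.pi)))) := by
    exact (Real.continuousAt_log (by positivity)).tendsto.comp h2
  simpa [Real.log_exp] using h3

lemma fR_diff (n : ℕ) (hn : 1 ≤ n) :
    fR n - fR (n+1) =
      ((n:ℝ)+1/2) * (Real.log (1 + 1/(2*(n:ℝ)+1)) - Real.log (1 - 1/(2*(n:ℝ)+1))) - 1 := by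
  have hx : (1:ℝ) ≤ (n:ℝ) := by exact_mod_cast hn
  have hx0 : (0:ℝ) < (n:ℝ) := by linarith
  have h2x : (0:ℝ) < 2*(n:ℝ)+1 := by linarith
  have hlog : Real.log (1 + 1/(2*(n:ℝ)+1)) - Real.log (1 - 1/(2*(n:ℝ)+1))
      = Real.log ((n:ℝ)+1) - Real.log n := by
    rw [show (1:ℝ) + 1/(2*(n:ℝ)+1) = (2*((n:ℝ)+1))/(2*(n:ℝ)+1) by field_simp; ring,
        show (1:ℝ) - 1/(2*(n:ℝ)+1) = (2*(n:ℝ))/(2*(n:ℝ)+1) by field_simp; ring,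
        Real.log_div (by positivity) h2x.ne', Real.log_div (by positivity) h2x.ne',
        Real.log_mul (by norm_num) (by positivity), Real.log_mul (by norm_num) hx0.ne']
    ring
  rw [hlog]
  simp only [fR, Nat.factorial_succ, Nat.cast_mul, Nat.cast_add, Nat.cast_one]
  rw [Real.log_mul (by positivity) (by exact_mod_cast (Nat.factorial_pos n).ne')]
  push_cast
  ring

lemma key_ub (n : ℕ) (hn : 1 ≤ n) :
    fR n - fR (n+1) < 1/(12*(n:ℝ)) - 1/(12*((n:ℝ)+1)) := by
  have hx : (1:ℝ) ≤ (n:ℝ) := by exact_mod_cast hn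
  have hx0 : (0:ℝ) < (n:ℝ) := by linarith
  have h2x : (0:ℝ) < 2*(n:ℝ)+1 := by linarith
  set t : ℝ := 1/(2*(n:ℝ)+1) with ht
  have h0 : 0 < t := by positivity
  have h1 : t < 1 := by rw [ht]; rw [div_lt_one h2x]; linarith
  have hA := artanh_ub h0 h1
  have hd := fR_diff n hn
  rw [← ht] at hd
  have hmul : (0:ℝ) < (n:ℝ)+1/2 := by linarith
  have step : fR n - fR (n+1) < ((n:ℝ)+1/2) * (2*t + 2*t^3/(3*(1-t^2))) - 1 := by
    rw [hd]
    have := mul_lt_mul_of_pos_left hA hmul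
    linarith
  have heq : ((n:ℝ)+1/2) * (2*t + 2*t^3/(3*(1-t^2))) - 1
      = 1/(12*(n:ℝ)) - 1/(12*((n:ℝ)+1)) := by
    have hne : (2*(n:ℝ)+1) ≠ 0 := h2x.ne'
    have hn0' : (n:ℝ) ≠ 0 := hx0.ne'
    have hn1 : (n:ℝ)+1 ≠ 0 := by positivity
    have e : (1:ℝ) - (1/(2*(n:ℝ)+1))^2 = (4*(n:ℝ)*((n:ℝ)+1))/(2*(n:ℝ)+1)^2 := by
      field_simp; ring
    rw [ht, e]
    field_simp
    ring
  linarith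
lemma key_lb (n : ℕ) (hn : 1 ≤ n) :
    1/(12*(n:ℝ)+1) - 1/(12*((n:ℝ)+1)+1) < fR n - fR (n+1) := by
  have hx : (1:ℝ) ≤ (n:ℝ) := by exact_mod_cast hn
  have hx0 : (0:ℝ) < (n:ℝ) := by linarith
  have h2x : (0:ℝ) < 2*(n:ℝ)+1 := by linarith
  set t : ℝ := 1/(2*(n:ℝ)+1) with ht
  have h0 : 0 < t := by positivity
  have h1 : t < 1 := by rw [ht]; rw [div_lt_one h2x]; linarith
  have hA := artanh_lb h0 h1
  have hd := fR_diff n hn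
  rw [← ht] at hd
  have hmul : (0:ℝ) < (n:ℝ)+1/2 := by linarith
  have step : ((n:ℝ)+1/2) * (2*t + 2*t^3/3) - 1 < fR n - fR (n+1) := by
    rw [hd]
    have := mul_lt_mul_of_pos_left hA hmul
    linarith
  have heq : ((n:ℝ)+1/2) * (2*t + 2*t^3/3) - 1 = 1/(3*(2*(n:ℝ)+1)^2) := by
    rw [ht]; field_simp; ring
  have harith : 1/(12*(n:ℝ)+1) - 1/(12*((n:ℝ)+1)+1) < 1/(3*(2*(n:ℝ)+1)^2) := by
    have ha : (0:ℝ) < 12*(n:ℝ)+1 := by linarith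
    have hb : (0:ℝ) < 12*((n:ℝ)+1)+1 := by linarith
    rw [div_sub_div _ _ ha.ne' hb.ne', div_lt_div_iff₀ (by positivity) (by positivity)]
    nlinarith
  linarith

noncomputable def aSeq (n : ℕ) : ℝ := fR n - 1/(12*(n:ℝ))
noncomputable def bSeq (n : ℕ) : ℝ := fR n - 1/(12*(n:ℝ)+1)

lemma tendsto_aSeq : Tendsto aSeq atTop (𝓝 (Real.log (Real.sqrt (2 * Real.pi)))) := by
  have h : Tendsto (fun n : ℕ => 1/(12*(n:ℝ))) atTop (𝓝 0) := by
    simp only [one_div]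
    apply Tendsto.comp tendsto_inv_atTop_zero
    exact (tendsto_natCast_atTop_atTop (R := ℝ)).const_mul_atTop (by norm_num)
  have h2 := tendsto_fR.sub h
  rw [sub_zero] at h2
  exact h2

lemma tendsto_bSeq : Tendsto bSeq atTop (𝓝 (Real.log (Real.sqrt (2 * Real.pi)))) := by
  have h : Tendsto (fun n : ℕ => 1/(12*(n:ℝ)+1)) atTop (𝓝 0) := by
    simp only [one_div]
    apply Tendsto.comp tendsto_inv_atTop_zero
    apply Filter.tendsto_atTop_add_const_right
    exact (tendsto_natCast_atTop_atTop (R := ℝ)).const_mul_atTop (by norm_num)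
  have h2 := tendsto_fR.sub h
  rw [sub_zero] at h2
  exact h2

lemma aSeq_lt (m : ℕ) (hm : 1 ≤ m) : aSeq m < Real.log (Real.sqrt (2 * Real.pi)) := by
  have step : ∀ k, 1 ≤ k → aSeq k < aSeq (k+1) := by
    intro k hk
    have := key_ub k hk
    simp only [aSeq]
    push_cast
    linarith
  have mono : ∀ k, m + 1 ≤ k → aSeq (m+1) ≤ aSeq k := by
    intro k hk
    induction k, hk using Nat.le_induction with
    | base => exact le_refl _
    | succ k hk ih => exact ih.trans (step k (by omega)).le
  have h2 : aSeq (m+1) ≤ Real.log (Real.sqrt (2 * Real.pi)) :=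
    ge_of_tendsto tendsto_aSeq (eventually_atTop.2 ⟨m+1, mono⟩)
  exact (step m hm).trans_le h2

lemma bSeq_gt (m : ℕ) (hm : 1 ≤ m) : Real.log (Real.sqrt (2 * Real.pi)) < bSeq m := by
  have step : ∀ k, 1 ≤ k → bSeq (k+1) < bSeq k := by
    intro k hk
    have := key_lb k hk
    simp only [bSeq]
    push_cast
    linarith
  have anti : ∀ k, m + 1 ≤ k → bSeq k ≤ bSeq (m+1) := by
    intro k hk
    induction k, hk using Nat.le_induction with
    | base => exact le_refl _
    | succ k hk ih => exact (step k (by omega)).le.trans ih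
  have h2 : Real.log (Real.sqrt (2 * Real.pi)) ≤ bSeq (m+1) :=
    le_of_tendsto tendsto_bSeq (eventually_atTop.2 ⟨m+1, anti⟩)
  exact h2.trans_lt (step m hm)

end RobbinsAux

/-- Robbins' refinement of Stirling's formula: for every integer `n ≥ 1`,
`√(2π)·n^{n+1/2}·e^{-n+1/(12n+1)} < n! < √(2π)·n^{n+1/2}·e^{-n+1/(12n)}`. -/
theorem stmt8 (n : ℕ) (hn : 1 ≤ n) :
    Real.sqrt (2 * π) * (n : ℝ) ^ ((n : ℝ) + 1 / 2) *
        Real.exp (-(n : ℝ) + 1 / (12 * (n : ℝ) + 1)) < (Nat.factorial n : ℝ) ∧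
      (Nat.factorial n : ℝ) < Real.sqrt (2 * π) * (n : ℝ) ^ ((n : ℝ) + 1 / 2) *
        Real.exp (-(n : ℝ) + 1 / (12 * (n : ℝ))) := by
  have hn0 : (0:ℝ) < (n:ℝ) := by exact_mod_cast hn
  have hfact : (0:ℝ) < (Nat.factorial n : ℝ) := by exact_mod_cast n.factorial_pos
  have hsq : (0:ℝ) < Real.sqrt (2 * π) := Real.sqrt_pos.2 (by positivity)
  have hrw : ∀ c : ℝ, Real.sqrt (2 * π) * (n : ℝ) ^ ((n : ℝ) + 1 / 2) *
      Real.exp (-(n : ℝ) + c) =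
      Real.exp (Real.log (Real.sqrt (2 * π)) + ((n:ℝ) + 1/2) * Real.log n + (-(n:ℝ) + c)) := by
    intro c
    simp only [Real.exp_add]
    rw [Real.exp_log hsq, Real.rpow_def_of_pos hn0]
    ring
  have hb := bSeq_gt n hn
  have ha := aSeq_lt n hn
  simp only [bSeq, fR] at hb
  simp only [aSeq, fR] at ha
  constructor
  · rw [hrw, ← Real.exp_log hfact, Real.exp_lt_exp]
    linarith
  · rw [hrw, ← Real.exp_log hfact, Real.exp_lt_exp]
    linarith
end

section
/- Let n ≥ 400, n = rm with r ≥ 4, and let ρ be an irreducible representation of S_n with d_ρ ≥ n²/3 satisfying the Fomin–Lulov bound |χ_ρ([r^m])| ≤ m! r^m / (rm)!^{1/r} · d_ρ^{1/r}. Then |χ_ρ([r^m])| / d_ρ ≤ 3/n. -/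
open Real Filter

lemma sseq_ge (n : ℕ) (hn : 1 ≤ n) : Real.sqrt π ≤ Stirling.stirlingSeq n := by
  obtain ⟨k, rfl⟩ : ∃ k, n = k + 1 := ⟨n - 1, by omega⟩
  have ht : Tendsto (Stirling.stirlingSeq ∘ Nat.succ) atTop (nhds (Real.sqrt π)) :=
    (Filter.tendsto_add_atTop_iff_nat 1).mpr Stirling.tendsto_stirlingSeq_sqrt_pi
  exact Stirling.stirlingSeq'_antitone.le_of_tendsto ht k

lemma sseq_le (n : ℕ) (hn : 1 ≤ n) : Stirling.stirlingSeq n ≤ Real.exp 1 / Real.sqrt 2 := by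
  obtain ⟨k, rfl⟩ : ∃ k, n = k + 1 := ⟨n - 1, by omega⟩
  have := Stirling.stirlingSeq'_antitone (Nat.zero_le k)
  simpa using this

lemma fact_eq (n : ℕ) (hn : 1 ≤ n) :
    ((Nat.factorial n : ℝ)) = Stirling.stirlingSeq n * (Real.sqrt (2 * n) * ((n : ℝ) / Real.exp 1) ^ n) := by
  have h0 : (0 : ℝ) < Real.sqrt (2 * n) * ((n : ℝ) / Real.exp 1) ^ n := by
    have : (0:ℝ) < n := by exact_mod_cast hn
    positivity
  rw [Stirling.stirlingSeq, div_mul_cancel₀ _ h0.ne']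

lemma fact_sq_eq (n : ℕ) (hn : 1 ≤ n) :
    ((Nat.factorial n : ℝ))^2 = (Stirling.stirlingSeq n)^2 * (2 * n) * (((n : ℝ) / Real.exp 1) ^ n)^2 := by
  rw [fact_eq n hn, mul_pow, mul_pow, Real.sq_sqrt (by positivity : (0:ℝ) ≤ 2 * n)]
  ring

lemma fact_sq_lower (n : ℕ) (hn : 1 ≤ n) :
    4 * (n : ℝ) * (((n : ℝ) / Real.exp 1) ^ n)^2 ≤ ((Nat.factorial n : ℝ))^2 := by
  rw [fact_sq_eq n hn]
  have hs := sseq_ge n hn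
  have hsp : Real.sqrt π ^ 2 = π := Real.sq_sqrt pi_pos.le
  have hn0 : (0:ℝ) ≤ n := Nat.cast_nonneg n
  have hq : (0:ℝ) ≤ (((n : ℝ) / Real.exp 1) ^ n)^2 := sq_nonneg _
  have hs2 : (2:ℝ) ≤ (Stirling.stirlingSeq n)^2 := by
    nlinarith [Real.pi_gt_three, Real.sqrt_nonneg π]
  nlinarith [mul_nonneg hn0 hq]

lemma fact_sq_upper (n : ℕ) (hn : 1 ≤ n) :
    ((Nat.factorial n : ℝ))^2 ≤ (Real.exp 1)^2 * (n : ℝ) * (((n : ℝ) / Real.exp 1) ^ n)^2 := by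
  rw [fact_sq_eq n hn]
  have hs := sseq_le n hn
  have hs0 : 0 < Stirling.stirlingSeq n := by
    obtain ⟨k, rfl⟩ : ∃ k, n = k + 1 := ⟨n - 1, by omega⟩
    exact Stirling.stirlingSeq'_pos k
  have hsq : Real.sqrt 2 ^ 2 = 2 := Real.sq_sqrt (by norm_num)
  have hs2 : (Stirling.stirlingSeq n)^2 ≤ (Real.exp 1)^2 / 2 := by
    have h2 : (0:ℝ) < Real.sqrt 2 := Real.sqrt_pos.mpr (by norm_num)
    have := mul_le_mul hs hs hs0.le (by positivity)
    rw [div_mul_div_comm] at this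
    calc (Stirling.stirlingSeq n)^2 = Stirling.stirlingSeq n * Stirling.stirlingSeq n := sq _
      _ ≤ Real.exp 1 * Real.exp 1 / (Real.sqrt 2 * Real.sqrt 2) := this
      _ = (Real.exp 1)^2 / 2 := by rw [← sq, ← sq, hsq]
  have hn0 : (0:ℝ) ≤ n := Nat.cast_nonneg n
  have hq : (0:ℝ) ≤ (((n : ℝ) / Real.exp 1) ^ n)^2 := sq_nonneg _
  nlinarith [mul_nonneg hn0 hq]

lemma core (n r m : ℕ) (hn : 400 ≤ n) (hnrm : n = r * m) (hr : 4 ≤ r) :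
    ((Nat.factorial m : ℝ))^r * (r:ℝ)^n * (n:ℝ)^2 ≤ 3 * (n:ℝ)^r * (Nat.factorial n : ℝ) := by
  have hm1 : 1 ≤ m := by
    rcases Nat.eq_zero_or_pos m with h | h
    · subst h; omega
    · exact h
  have hn1 : 1 ≤ n := by omega
  set e : ℝ := Real.exp 1 with he
  have he0 : 0 < e := Real.exp_pos 1
  -- cast facts
  have hnc : (2:ℝ) ≤ (n:ℝ) := by exact_mod_cast (by omega : 2 ≤ n)
  have h4m : (4:ℝ) * m ≤ (n:ℝ) := by
    have : 4 * m ≤ n := by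
      calc 4 * m ≤ r * m := Nat.mul_le_mul_right m hr
        _ = n := hnrm.symm
    exact_mod_cast this
  have hmr : m * r = n := by rw [hnrm, Nat.mul_comm]
  -- key numeric inequality
  have he8 : e^2 ≤ 8 := by nlinarith [Real.exp_one_lt_d9, Real.exp_pos 1]
  obtain ⟨k, hk⟩ : ∃ k, r = k + 3 := ⟨r - 3, by omega⟩
  have key : (e^2)^r * (m:ℝ)^r * (n:ℝ)^4 ≤ 36 * (n:ℝ)^(2*r+1) := by
    have c1 : (e^2)^r * (m:ℝ)^r * (n:ℝ)^4 ≤ 8^r * (m:ℝ)^r * (n:ℝ)^4 := by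
      gcongr
    have c2 : (8:ℝ)^r * (m:ℝ)^r * (n:ℝ)^4 = 2^r * ((4 * m : ℝ))^r * (n:ℝ)^4 := by
      rw [show (8:ℝ) = 2 * 4 by norm_num, mul_pow, mul_pow]
      ring
    have c3 : (2:ℝ)^r * ((4 * m : ℝ))^r * (n:ℝ)^4 ≤ 2^r * (n:ℝ)^r * (n:ℝ)^4 := by
      gcongr
    have c4 : (2:ℝ)^r * (n:ℝ)^r * (n:ℝ)^4 ≤ 36 * (n:ℝ)^(2*r+1) := by
      have e1 : (2:ℝ)^r = 8 * 2^k := by rw [hk]; ring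
      have e2 : (n:ℝ)^(2*r+1) = (n:ℝ)^k * ((n:ℝ)^r * (n:ℝ)^4) := by
        rw [← pow_add, ← pow_add]; congr 1; omega
      have e3 : (2:ℝ)^k ≤ (n:ℝ)^k := by
        gcongr
      rw [e1, e2]
      have hnr4 : (0:ℝ) ≤ (n:ℝ)^r * (n:ℝ)^4 := by positivity
      nlinarith [mul_le_mul_of_nonneg_right e3 hnr4, pow_nonneg (by norm_num : (0:ℝ) ≤ 2) k]
    calc (e^2)^r * (m:ℝ)^r * (n:ℝ)^4 ≤ 8^r * (m:ℝ)^r * (n:ℝ)^4 := c1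
      _ = 2^r * ((4 * m : ℝ))^r * (n:ℝ)^4 := c2
      _ ≤ 2^r * (n:ℝ)^r * (n:ℝ)^4 := c3
      _ ≤ 36 * (n:ℝ)^(2*r+1) := c4
  -- set up squares
  set X : ℝ := ((Nat.factorial m : ℝ))^r * (r:ℝ)^n * (n:ℝ)^2 with hX
  set Y : ℝ := 3 * (n:ℝ)^r * (Nat.factorial n : ℝ) with hY
  have hX0 : 0 ≤ X := by positivity
  have hY0 : 0 ≤ Y := by positivity
  refine (pow_le_pow_iff_left₀ hX0 hY0 (two_ne_zero)).mp ?_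
  have hU := fact_sq_upper m hm1
  have hL := fact_sq_lower n hn1
  set Q : ℝ := (((n : ℝ) / e) ^ n)^2 with hQ
  have hQ0 : 0 ≤ Q := sq_nonneg _
  -- X^2 ≤ e^{2r} m^r n^4 Q
  have hcast : (m:ℝ) * (r:ℝ) = (n:ℝ) := by rw [← Nat.cast_mul, hmr]
  have h2cast : ((m:ℝ)/e) * r = (n:ℝ)/e := by rw [div_mul_eq_mul_div, hcast]
  have hmix : ((((m:ℝ)/e)^m)^2)^r * ((r:ℝ)^n)^2 = Q := by
    calc ((((m:ℝ)/e)^m)^2)^r * ((r:ℝ)^n)^2 = ((((m:ℝ)/e)^m)^r)^2 * ((r:ℝ)^n)^2 := by ring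
      _ = (((m:ℝ)/e)^n)^2 * ((r:ℝ)^n)^2 := by rw [← pow_mul ((m:ℝ)/e) m r, hmr]
      _ = ((((m:ℝ)/e) * r)^n)^2 := by rw [← mul_pow, ← mul_pow]
      _ = Q := by rw [h2cast]
  have hX2 : X^2 ≤ (e^2)^r * (m:ℝ)^r * (n:ℝ)^4 * Q := by
    calc X^2 = ((Nat.factorial m : ℝ)^2)^r * ((r:ℝ)^n)^2 * ((n:ℝ)^2)^2 := by ring
      _ ≤ (e^2 * m * (((m:ℝ)/e)^m)^2)^r * ((r:ℝ)^n)^2 * ((n:ℝ)^2)^2 := by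
          gcongr
      _ = (e^2)^r * (m:ℝ)^r * ((((m:ℝ)/e)^m)^2)^r * ((r:ℝ)^n)^2 * (n:ℝ)^4 := by ring
      _ = (e^2)^r * (m:ℝ)^r * (n:ℝ)^4 * ((((m:ℝ)/e)^m)^2)^r * ((r:ℝ)^n)^2 := by ring
      _ = (e^2)^r * (m:ℝ)^r * (n:ℝ)^4 * Q := by rw [mul_assoc _ _ (((r:ℝ)^n)^2), hmix]
  have hY2 : 36 * (n:ℝ)^(2*r+1) * Q ≤ Y^2 := by
    have : Y^2 = 9 * ((n:ℝ)^r)^2 * (Nat.factorial n : ℝ)^2 := by ring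
    rw [this]
    have h9 : 9 * ((n:ℝ)^r)^2 * (4 * (n:ℝ) * Q) ≤ 9 * ((n:ℝ)^r)^2 * (Nat.factorial n : ℝ)^2 :=
      mul_le_mul_of_nonneg_left hL (by positivity)
    calc 36 * (n:ℝ)^(2*r+1) * Q = 9 * ((n:ℝ)^r)^2 * (4 * (n:ℝ) * Q) := by
          rw [← pow_mul, pow_add, pow_one]; ring
      _ ≤ 9 * ((n:ℝ)^r)^2 * (Nat.factorial n : ℝ)^2 := h9
  calc X^2 ≤ (e^2)^r * (m:ℝ)^r * (n:ℝ)^4 * Q := hX2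
    _ ≤ 36 * (n:ℝ)^(2*r+1) * Q := mul_le_mul_of_nonneg_right key hQ0
    _ ≤ Y^2 := hY2



/-- Let `n ≥ 400`, `n = r·m` with `r ≥ 4`, and let `ρ` be an irreducible representation of
`S_n` with dimension `d ≥ n²/3` whose character value `χ` on the class `[r^m]` satisfies the
Fomin–Lulov bound. Then `|χ|/d ≤ 3/n`. -/
theorem stmt10 (n r m : ℕ) (hn : 400 ≤ n) (hnrm : n = r * m) (hr : 4 ≤ r)
    (χ d : ℝ) (hd : (n : ℝ) ^ 2 / 3 ≤ d)
    (hFL : |χ| ≤ (Nat.factorial m : ℝ) * (r : ℝ) ^ m /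
        ((Nat.factorial (r * m) : ℝ)) ^ (1 / (r : ℝ)) * d ^ (1 / (r : ℝ))) :
    |χ| / d ≤ 3 / (n : ℝ) := by
  have hm1 : 1 ≤ m := by
    rcases Nat.eq_zero_or_pos m with h | h
    · subst h; omega
    · exact h
  have hn400 : (400:ℝ) ≤ (n:ℝ) := by exact_mod_cast hn
  have hnpos : (0:ℝ) < n := by linarith
  have hrpos : (0:ℝ) < r := by exact_mod_cast (by omega : 0 < r)
  have hrne : (r:ℝ) ≠ 0 := hrpos.ne'
  have hC0 : (0:ℝ) < (n:ℝ)^2/3 := by positivity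
  have hd0 : (0:ℝ) < d := lt_of_lt_of_le hC0 hd
  set p : ℝ := 1/(r:ℝ) with hp
  have hpr : p * (r:ℝ) = 1 := by rw [hp, one_div, inv_mul_cancel₀ hrne]
  have hfacpos : (0:ℝ) < (Nat.factorial (r*m) : ℝ) := by
    exact_mod_cast Nat.factorial_pos (r*m)
  set K : ℝ := (Nat.factorial m : ℝ) * (r:ℝ)^m / ((Nat.factorial (r*m) : ℝ)) ^ p with hK
  have hK0 : 0 ≤ K := by positivity
  have h1 : |χ| / d ≤ K * d ^ (p - 1) := by
    calc |χ|/d ≤ (K * d^p)/d := (div_le_div_iff_of_pos_right hd0).mpr hFL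
      _ = K * (d^p / d) := by rw [mul_div_assoc]
      _ = K * d^(p-1) := by rw [Real.rpow_sub_one hd0.ne']
  set C : ℝ := (n:ℝ)^2/3 with hC
  have h2 : d ^ (p-1) ≤ C ^ (p-1) := by
    apply Real.rpow_le_rpow_of_nonpos hC0 hd
    have h1r : p ≤ 1 := by
      rw [hp, div_le_one hrpos]
      exact_mod_cast (by omega : 1 ≤ r)
    linarith
  have h3 : |χ|/d ≤ K * C^(p-1) := h1.trans (mul_le_mul_of_nonneg_left h2 hK0)
  refine h3.trans ?_
  have hA0 : 0 ≤ K * C^(p-1) := by positivity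
  have hB0 : (0:ℝ) ≤ 3/(n:ℝ) := by positivity
  refine (pow_le_pow_iff_left₀ hA0 hB0 (by omega : r ≠ 0)).mp ?_
  have hfr : (((Nat.factorial (r*m) : ℝ)) ^ p) ^ r = (Nat.factorial (r*m) : ℝ) := by
    rw [← Real.rpow_natCast (((Nat.factorial (r*m) : ℝ)) ^ p) r,
      ← Real.rpow_mul hfacpos.le, hpr, Real.rpow_one]
  have hCr : (C ^ (p-1)) ^ r = C / C ^ r := by
    rw [← Real.rpow_natCast (C ^ (p-1)) r, ← Real.rpow_mul hC0.le]
    have heq : (p - 1) * (r:ℝ) = 1 - (r:ℝ) := by rw [sub_mul, hpr, one_mul]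
    rw [heq, Real.rpow_sub hC0, Real.rpow_one, Real.rpow_natCast]
  have hmr : m * r = n := by rw [hnrm, Nat.mul_comm]
  have hKr : K ^ r = (Nat.factorial m : ℝ)^r * (r:ℝ)^n / (Nat.factorial (r*m) : ℝ) := by
    rw [hK, div_pow, mul_pow, hfr, ← pow_mul (r:ℝ) m r, hmr]
  rw [mul_pow, hKr, hCr, div_mul_div_comm, div_pow (3:ℝ) (n:ℝ) r,
    div_le_div_iff₀ (by positivity) (by positivity)]
  have hcore := core n r m hn hnrm hr
  have hF : (Nat.factorial n : ℝ) = (Nat.factorial (r*m) : ℝ) := by rw [hnrm]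
  rw [hF] at hcore
  have hmul := mul_le_mul_of_nonneg_right hcore (pow_nonneg (Nat.cast_nonneg n) r)
  have hCr2 : C ^ r = ((n:ℝ)^2)^r / 3^r := by rw [hC, div_pow]
  have expand : ((n:ℝ)^2)^r = (n:ℝ)^r * (n:ℝ)^r := by
    rw [← pow_mul, two_mul, pow_add]
  have h3r : (0:ℝ) < (3:ℝ)^r := by positivity
  have hrhs : (3:ℝ)^r * ((Nat.factorial (r*m) : ℝ) * C ^ r) =
      3 * ((Nat.factorial (r*m) : ℝ) * ((n:ℝ)^r * (n:ℝ)^r)) / 3 := by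
    rw [hCr2, expand]; field_simp
  have hlhs : (Nat.factorial m : ℝ)^r * (r:ℝ)^n * C * (n:ℝ)^r =
      (Nat.factorial m : ℝ)^r * (r:ℝ)^n * (n:ℝ)^2 * (n:ℝ)^r / 3 := by
    rw [hC]; ring
  rw [hrhs, hlhs]
  nlinarith [hmul]
end

section
/- Let n ≥ 400, n = rm with r ∈ {2,3}, and let ρ be an irreducible representation of S_n with d_ρ ≥ n²/3 satisfying the Fomin–Lulov bound |χ_ρ([r^m])| ≤ m! r^m / (rm)!^{1/r} · d_ρ^{1/r}. Then |χ_ρ([r^m])| / d_ρ ≤ 3/√n. -/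
lemma fact2' (m : ℕ) : (Nat.factorial m) ^ 2 * 4 ^ m ≤ (2 * m + 1) * Nat.factorial (2 * m) := by
  induction m with
  | zero => simp
  | succ k ih =>
    have h2 : Nat.factorial (2 * (k + 1)) =
        (2 * k + 2) * ((2 * k + 1) * Nat.factorial (2 * k)) := by
      have e : 2 * (k + 1) = 2 * k + 1 + 1 := by ring
      rw [e, Nat.factorial_succ, Nat.factorial_succ]
    calc (Nat.factorial (k + 1)) ^ 2 * 4 ^ (k + 1)
        = 4 * (k + 1) ^ 2 * ((Nat.factorial k) ^ 2 * 4 ^ k) := by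
          rw [Nat.factorial_succ]; ring
      _ ≤ 4 * (k + 1) ^ 2 * ((2 * k + 1) * Nat.factorial (2 * k)) :=
          Nat.mul_le_mul_left _ ih
      _ ≤ (2 * (k + 1) + 1) * Nat.factorial (2 * (k + 1)) := by
          rw [h2]
          have key : 4 * (k + 1) ^ 2 * (2 * k + 1) ≤
              (2 * (k + 1) + 1) * ((2 * k + 2) * (2 * k + 1)) := by nlinarith
          calc 4 * (k + 1) ^ 2 * ((2 * k + 1) * Nat.factorial (2 * k))
              = 4 * (k + 1) ^ 2 * (2 * k + 1) * Nat.factorial (2 * k) := by ring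
            _ ≤ (2 * (k + 1) + 1) * ((2 * k + 2) * (2 * k + 1)) * Nat.factorial (2 * k) :=
                Nat.mul_le_mul_right _ key
            _ = (2 * (k + 1) + 1) * ((2 * k + 2) * ((2 * k + 1) * Nat.factorial (2 * k))) := by
                ring

lemma fact3' (m : ℕ) :
    (Nat.factorial m) ^ 3 * 27 ^ m ≤ (3 * m + 1) ^ 2 * Nat.factorial (3 * m) := by
  induction m with
  | zero => simp
  | succ k ih =>
    have h2 : Nat.factorial (3 * (k + 1)) =
        (3 * k + 3) * ((3 * k + 2) * ((3 * k + 1) * Nat.factorial (3 * k))) := by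
      have e : 3 * (k + 1) = 3 * k + 1 + 1 + 1 := by ring
      rw [e, Nat.factorial_succ, Nat.factorial_succ, Nat.factorial_succ]
    calc (Nat.factorial (k + 1)) ^ 3 * 27 ^ (k + 1)
        = 27 * (k + 1) ^ 3 * ((Nat.factorial k) ^ 3 * 27 ^ k) := by
          rw [Nat.factorial_succ]; ring
      _ ≤ 27 * (k + 1) ^ 3 * ((3 * k + 1) ^ 2 * Nat.factorial (3 * k)) :=
          Nat.mul_le_mul_left _ ih
      _ ≤ (3 * (k + 1) + 1) ^ 2 * Nat.factorial (3 * (k + 1)) := by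
          rw [h2]
          have key : 27 * (k + 1) ^ 3 * (3 * k + 1) ^ 2 ≤
              (3 * (k + 1) + 1) ^ 2 * ((3 * k + 3) * ((3 * k + 2) * (3 * k + 1))) := by
            nlinarith
          calc 27 * (k + 1) ^ 3 * ((3 * k + 1) ^ 2 * Nat.factorial (3 * k))
              = 27 * (k + 1) ^ 3 * (3 * k + 1) ^ 2 * Nat.factorial (3 * k) := by ring
            _ ≤ (3 * (k + 1) + 1) ^ 2 * ((3 * k + 3) * ((3 * k + 2) * (3 * k + 1))) *
                Nat.factorial (3 * k) := Nat.mul_le_mul_right _ key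
            _ = (3 * (k + 1) + 1) ^ 2 * ((3 * k + 3) * ((3 * k + 2) *
                ((3 * k + 1) * Nat.factorial (3 * k)))) := by ring

lemma rpow_half_sq {x : ℝ} (hx : 0 ≤ x) : (x ^ ((1 : ℝ) / 2)) ^ 2 = x := by
  rw [← Real.rpow_natCast (x ^ ((1 : ℝ) / 2)) 2, ← Real.rpow_mul hx]
  norm_num

lemma rpow_third_cube {x : ℝ} (hx : 0 ≤ x) : (x ^ ((1 : ℝ) / 3)) ^ 3 = x := by
  rw [← Real.rpow_natCast (x ^ ((1 : ℝ) / 3)) 3, ← Real.rpow_mul hx]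
  norm_num

lemma sq_le_sq_imp {a b : ℝ} (ha : 0 ≤ a) (hb : 0 ≤ b) (h : a ^ 2 ≤ b ^ 2) : a ≤ b :=
  (pow_le_pow_iff_left₀ ha hb (by norm_num)).1 h

lemma six_le_six_imp {a b : ℝ} (ha : 0 ≤ a) (hb : 0 ≤ b) (h : a ^ 6 ≤ b ^ 6) : a ≤ b :=
  (pow_le_pow_iff_left₀ ha hb (by norm_num)).1 h

/-- Let `n ≥ 400`, `n = r·m` with `r ∈ {2,3}`, and let `ρ` be an irreducible representation
of `S_n` with dimension `d ≥ n²/3` whose character value `χ` on the class `[r^m]` satisfies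
the Fomin–Lulov bound. Then `|χ|/d ≤ 3/√n`. -/
theorem stmt11 (n r m : ℕ) (hn : 400 ≤ n) (hnrm : n = r * m) (hr : r = 2 ∨ r = 3)
    (χ d : ℝ) (hd : (n : ℝ) ^ 2 / 3 ≤ d)
    (hFL : |χ| ≤ (Nat.factorial m : ℝ) * (r : ℝ) ^ m /
        ((Nat.factorial (r * m) : ℝ)) ^ (1 / (r : ℝ)) * d ^ (1 / (r : ℝ))) :
    |χ| / d ≤ 3 / Real.sqrt (n : ℝ) := by
  have hn' : (400 : ℝ) ≤ (n : ℝ) := by exact_mod_cast hn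
  have hd0 : (0 : ℝ) < d := lt_of_lt_of_le (by nlinarith) hd
  have hχ0 : (0 : ℝ) ≤ |χ| := abs_nonneg χ
  have hsq : 0 < Real.sqrt (n : ℝ) := Real.sqrt_pos.2 (by linarith)
  have hN0 : (0 : ℝ) < (Nat.factorial n : ℝ) := by
    exact_mod_cast Nat.factorial_pos n
  rw [div_le_div_iff₀ hd0 hsq]
  rcases hr with hr | hr
  · subst hr
    rw [← hnrm] at hFL
    push_cast at hFL
    -- key: |χ|^2 ≤ (n+1) * d
    have hF : ((Nat.factorial m : ℝ) * 2 ^ m) ^ 2 ≤ ((n : ℝ) + 1) * (Nat.factorial n : ℝ) := by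
      have h := fact2' m
      rw [← hnrm] at h
      have e : (Nat.factorial m * 2 ^ m) ^ 2 = (Nat.factorial m) ^ 2 * 4 ^ m := by
        rw [mul_pow, ← pow_mul, mul_comm m 2, pow_mul]; norm_num
      calc ((Nat.factorial m : ℝ) * 2 ^ m) ^ 2
          = (((Nat.factorial m * 2 ^ m) ^ 2 : ℕ) : ℝ) := by push_cast; ring
        _ ≤ (((n + 1) * Nat.factorial n : ℕ) : ℝ) := by
            exact_mod_cast (e ▸ h)
        _ = ((n : ℝ) + 1) * (Nat.factorial n : ℝ) := by push_cast; ring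
    have key : |χ| ^ 2 ≤ ((n : ℝ) + 1) * d := by
      have h1 : |χ| ^ 2 ≤ ((Nat.factorial m : ℝ) * 2 ^ m /
          (Nat.factorial n : ℝ) ^ ((1 : ℝ) / 2) * d ^ ((1 : ℝ) / 2)) ^ 2 :=
        pow_le_pow_left₀ hχ0 hFL 2
      rw [mul_pow, div_pow, rpow_half_sq hN0.le, rpow_half_sq hd0.le] at h1
      calc |χ| ^ 2 ≤ ((Nat.factorial m : ℝ) * 2 ^ m) ^ 2 / (Nat.factorial n : ℝ) * d := h1
        _ ≤ (((n : ℝ) + 1) * (Nat.factorial n : ℝ)) / (Nat.factorial n : ℝ) * d := by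
            gcongr
        _ = ((n : ℝ) + 1) * d := by field_simp
    -- conclude
    apply sq_le_sq_imp (by positivity) (by positivity)
    have hs : (Real.sqrt (n : ℝ)) ^ 2 = (n : ℝ) := Real.sq_sqrt (by positivity)
    have h9 : (n : ℝ) ^ 2 ≤ 3 * d := by linarith
    calc (|χ| * Real.sqrt (n : ℝ)) ^ 2 = |χ| ^ 2 * (Real.sqrt (n : ℝ)) ^ 2 := by ring
      _ = |χ| ^ 2 * (n : ℝ) := by rw [hs]
      _ ≤ (((n : ℝ) + 1) * d) * (n : ℝ) := by
          apply mul_le_mul_of_nonneg_right key (by positivity)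
      _ ≤ (3 * d) ^ 2 := by nlinarith [mul_le_mul_of_nonneg_right h9 hd0.le]
  · subst hr
    rw [← hnrm] at hFL
    push_cast at hFL
    have hF : ((Nat.factorial m : ℝ) * 3 ^ m) ^ 3 ≤
        ((n : ℝ) + 1) ^ 2 * (Nat.factorial n : ℝ) := by
      have h := fact3' m
      rw [← hnrm] at h
      have e : (Nat.factorial m * 3 ^ m) ^ 3 = (Nat.factorial m) ^ 3 * 27 ^ m := by
        rw [mul_pow, ← pow_mul, mul_comm m 3, pow_mul]; norm_num
      calc ((Nat.factorial m : ℝ) * 3 ^ m) ^ 3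
          = (((Nat.factorial m * 3 ^ m) ^ 3 : ℕ) : ℝ) := by push_cast; ring
        _ ≤ (((n + 1) ^ 2 * Nat.factorial n : ℕ) : ℝ) := by
            exact_mod_cast (e ▸ h)
        _ = ((n : ℝ) + 1) ^ 2 * (Nat.factorial n : ℝ) := by push_cast; ring
    have key : |χ| ^ 3 ≤ ((n : ℝ) + 1) ^ 2 * d := by
      have h1 : |χ| ^ 3 ≤ ((Nat.factorial m : ℝ) * 3 ^ m /
          (Nat.factorial n : ℝ) ^ ((1 : ℝ) / 3) * d ^ ((1 : ℝ) / 3)) ^ 3 :=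
        pow_le_pow_left₀ hχ0 hFL 3
      rw [mul_pow, div_pow, rpow_third_cube hN0.le, rpow_third_cube hd0.le] at h1
      calc |χ| ^ 3 ≤ ((Nat.factorial m : ℝ) * 3 ^ m) ^ 3 / (Nat.factorial n : ℝ) * d := h1
        _ ≤ (((n : ℝ) + 1) ^ 2 * (Nat.factorial n : ℝ)) / (Nat.factorial n : ℝ) * d := by
            gcongr
        _ = ((n : ℝ) + 1) ^ 2 * d := by field_simp
    apply six_le_six_imp (by positivity) (by positivity)
    have hs : (Real.sqrt (n : ℝ)) ^ 2 = (n : ℝ) := Real.sq_sqrt (by positivity)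
    have hs6 : (Real.sqrt (n : ℝ)) ^ 6 = (n : ℝ) ^ 3 := by
      rw [show (6 : ℕ) = 2 * 3 from rfl, pow_mul, hs]
    have hkey2 : |χ| ^ 6 ≤ (((n : ℝ) + 1) ^ 2 * d) ^ 2 := by
      calc |χ| ^ 6 = (|χ| ^ 3) ^ 2 := by ring
        _ ≤ (((n : ℝ) + 1) ^ 2 * d) ^ 2 := pow_le_pow_left₀ (by positivity) key 2
    have hd4 : (n : ℝ) ^ 8 / 81 ≤ d ^ 4 := by
      calc (n : ℝ) ^ 8 / 81 = ((n : ℝ) ^ 2 / 3) ^ 4 := by ring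
        _ ≤ d ^ 4 := pow_le_pow_left₀ (by positivity) hd 4
    have hn14 : ((n : ℝ) + 1) ^ 4 ≤ 16 * (n : ℝ) ^ 4 := by
      calc ((n : ℝ) + 1) ^ 4 ≤ (2 * (n : ℝ)) ^ 4 :=
            pow_le_pow_left₀ (by positivity) (by linarith) 4
        _ = 16 * (n : ℝ) ^ 4 := by ring
    calc (|χ| * Real.sqrt (n : ℝ)) ^ 6 = |χ| ^ 6 * (Real.sqrt (n : ℝ)) ^ 6 := by ring
      _ = |χ| ^ 6 * (n : ℝ) ^ 3 := by rw [hs6]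
      _ ≤ (((n : ℝ) + 1) ^ 2 * d) ^ 2 * (n : ℝ) ^ 3 :=
          mul_le_mul_of_nonneg_right hkey2 (by positivity)
      _ = ((n : ℝ) + 1) ^ 4 * (n : ℝ) ^ 3 * d ^ 2 := by ring
      _ ≤ (16 * (n : ℝ) ^ 4) * (n : ℝ) ^ 3 * d ^ 2 := by
          have := mul_le_mul_of_nonneg_right
            (mul_le_mul_of_nonneg_right hn14 (by positivity : (0:ℝ) ≤ (n:ℝ) ^ 3)) (sq_nonneg d)
          linarith
      _ = 16 * ((n : ℝ) ^ 7 * d ^ 2) := by ring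
      _ ≤ 9 * (n : ℝ) * ((n : ℝ) ^ 7 * d ^ 2) :=
          mul_le_mul_of_nonneg_right (by linarith) (by positivity)
      _ = 729 * ((n : ℝ) ^ 8 / 81 * d ^ 2) := by ring
      _ ≤ 729 * (d ^ 4 * d ^ 2) := by
          have := mul_le_mul_of_nonneg_right hd4 (sq_nonneg d)
          linarith
      _ = (3 * d) ^ 6 := by ring
end

section
/- Let λ be a partition of n ≥ 2 whose Young diagram contains the box (2,2), with arm length a (first row minus first cell) and leg length l (first column minus first cell), a ≥ l ≥ 2. Then the number of standard Young tableaux of shape λ is at least C(a+l, l+1). -/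
open Finset

section Aux

/-- Rank of `p` in `s` with respect to the value function `v`. -/
def rkv (s : Finset (ℕ × ℕ)) (v : ℕ × ℕ → ℕ) (p : ℕ × ℕ) : ℕ :=
  (s.filter (fun q => v q ≤ v p)).card

lemma rkv_lt (s : Finset (ℕ × ℕ)) (v : ℕ × ℕ → ℕ) {p q : ℕ × ℕ}
    (hq : q ∈ s) (h : v p < v q) : rkv s v p < rkv s v q := by
  apply Finset.card_lt_card
  constructor
  · intro r hr
    simp only [mem_filter] at hr ⊢
    exact ⟨hr.1, le_trans hr.2 h.le⟩
  · intro hsub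
    have : q ∈ s.filter (fun r => v r ≤ v p) := hsub (by simp [hq])
    simp only [mem_filter] at this
    omega

lemma rkv_mem_Icc (s : Finset (ℕ × ℕ)) (v : ℕ × ℕ → ℕ) {p : ℕ × ℕ}
    (hp : p ∈ s) : rkv s v p ∈ Finset.Icc 1 s.card := by
  simp only [mem_Icc]
  constructor
  · exact Finset.card_pos.2 ⟨p, by simp [hp]⟩
  · exact Finset.card_filter_le _ _

lemma rkv_injOn (s : Finset (ℕ × ℕ)) (v : ℕ × ℕ → ℕ) (hv : Set.InjOn v ↑s) :
    Set.InjOn (rkv s v) ↑s := by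
  intro p hp q hq h
  rcases lt_trichotomy (v p) (v q) with h' | h' | h'
  · exact absurd h (by have := rkv_lt s v hq h'; omega)
  · exact hv hp hq h'
  · exact absurd h (by have := rkv_lt s v hp h'; omega)

lemma rkv_bijOn (s : Finset (ℕ × ℕ)) (v : ℕ × ℕ → ℕ) (hv : Set.InjOn v ↑s) :
    Set.BijOn (rkv s v) ↑s (Set.Icc 1 s.card) := by
  have hinj := rkv_injOn s v hv
  have himg : s.image (rkv s v) = Finset.Icc 1 s.card := by
    apply Finset.eq_of_subset_of_card_le
    · intro t ht
      simp only [mem_image] at ht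
      obtain ⟨p, hp, rfl⟩ := ht
      exact rkv_mem_Icc s v hp
    · rw [Finset.card_image_of_injOn hinj, Nat.card_Icc]
      omega
  refine ⟨fun p hp => ?_, hinj, fun t ht => ?_⟩
  · have := rkv_mem_Icc s v (by exact_mod_cast hp : p ∈ s)
    simpa [Set.mem_Icc, Finset.mem_Icc] using this
  · have : t ∈ Finset.Icc 1 s.card := by simpa [Finset.mem_Icc, Set.mem_Icc] using ht
    rw [← himg] at this
    simp only [mem_image] at this
    obtain ⟨p, hp, rfl⟩ := this
    exact ⟨p, hp, rfl⟩

variable {a l : ℕ}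

/-- The value function from which the tableau is built. -/
def vfun (K N : ℕ) (eA : Fin a → ℕ) (eS : Fin (l + 1) → ℕ) (ha : 0 < a) : ℕ × ℕ → ℕ :=
  fun p =>
    if p = (0, 0) then 1
    else if p = (1, 1) then eS (Fin.last l)
    else if p.1 = 0 then eA ⟨(p.2 - 1) % a, Nat.mod_lt _ ha⟩
    else if p.2 = 0 then eS ⟨(p.1 - 1) % (l + 1), Nat.mod_lt _ l.succ_pos⟩
    else K + 1 + (N * p.2 + p.1)

variable {K N : ℕ} {eA : Fin a → ℕ} {eS : Fin (l + 1) → ℕ} {ha : 0 < a}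

lemma vfun_00 : vfun K N eA eS ha (0, 0) = 1 := by simp [vfun]

lemma vfun_11 : vfun K N eA eS ha (1, 1) = eS (Fin.last l) := by norm_num [vfun]

lemma vfun_arm {j : ℕ} (h1 : 1 ≤ j) (h2 : j ≤ a) :
    vfun K N eA eS ha (0, j) = eA ⟨j - 1, lt_of_lt_of_le (Nat.pred_lt (Nat.one_le_iff_ne_zero.mp h1)) h2⟩ := by
  have e1 : ((0 : ℕ), j) ≠ ((0 : ℕ), (0 : ℕ)) := by simp; omega
  have e2 : ((0 : ℕ), j) ≠ ((1 : ℕ), (1 : ℕ)) := by simp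
  rw [vfun, if_neg e1, if_neg e2, if_pos rfl]
  congr 1
  exact Fin.ext (Nat.mod_eq_of_lt (lt_of_lt_of_le (Nat.pred_lt (Nat.one_le_iff_ne_zero.mp h1)) h2))

lemma vfun_leg {i : ℕ} (h1 : 1 ≤ i) (h2 : i ≤ l) :
    vfun K N eA eS ha (i, 0) = eS ⟨i - 1, lt_of_le_of_lt (Nat.sub_le i 1) (Nat.lt_succ_of_le h2)⟩ := by
  have e1 : (i, (0 : ℕ)) ≠ ((0 : ℕ), (0 : ℕ)) := by simp; omega
  have e2 : (i, (0 : ℕ)) ≠ ((1 : ℕ), (1 : ℕ)) := by simp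
  have e3 : ¬(i, (0 : ℕ)).1 = 0 := by simp; omega
  rw [vfun, if_neg e1, if_neg e2, if_neg e3, if_pos rfl]
  congr 1
  exact Fin.ext (Nat.mod_eq_of_lt (lt_of_le_of_lt (Nat.sub_le i 1) (Nat.lt_succ_of_le h2)))

lemma vfun_else {i j : ℕ} (h1 : 1 ≤ i) (h2 : 1 ≤ j) (h3 : ¬(i = 1 ∧ j = 1)) :
    vfun K N eA eS ha (i, j) = K + 1 + (N * j + i) := by
  have e1 : (i, j) ≠ ((0 : ℕ), (0 : ℕ)) := by simp; omega
  have e2 : (i, j) ≠ ((1 : ℕ), (1 : ℕ)) := by simp; omega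
  have e3 : ¬(i, j).1 = 0 := by simp; omega
  have e4 : ¬(i, j).2 = 0 := by simp; omega
  rw [vfun, if_neg e1, if_neg e2, if_neg e3, if_neg e4]

end Aux

/-- The key construction. -/
theorem key_syt (μ : YoungDiagram) (a l : ℕ) (hl2 : 2 ≤ l) (hla : l ≤ a)
    (hrow : μ.rowLen 0 = a + 1) (hcol : μ.colLen 0 = l + 1) (h22 : ((1 : ℕ), (1 : ℕ)) ∈ μ)
    (S : Finset ℕ) (hSsub : S ⊆ Finset.Icc 3 (a + l + 2)) (hScard : S.card = l + 1) :
    ∃ f : ℕ × ℕ → ℕ, IsSYT μ f ∧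
      ((((Finset.Icc 1 l).image (fun i => (i, 0))) ∪ {((1 : ℕ), (1 : ℕ))}).image f) = S := by
  have ha2 : 2 ≤ a := hl2.trans hla
  have ha0 : 0 < a := by omega
  set K := a + l + 2 with hK
  set A : Finset ℕ := insert 2 (Finset.Icc 3 K \ S) with hA
  have h2A : (2 : ℕ) ∈ A := Finset.mem_insert_self _ _
  have hAsub : A ⊆ Finset.Icc 2 K := by
    intro x hx
    rcases Finset.mem_insert.1 hx with rfl | hx
    · simp only [Finset.mem_Icc]; omega
    · have := (Finset.mem_sdiff.1 hx).1
      simp only [Finset.mem_Icc] at this ⊢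
      omega
  have hAcard : A.card = a := by
    rw [hA, Finset.card_insert_of_notMem, Finset.card_sdiff_of_subset hSsub, Nat.card_Icc, hScard]
    · omega
    · intro h
      have := (Finset.mem_sdiff.1 h).1
      simp only [Finset.mem_Icc] at this
      omega
  have hAS : ∀ x ∈ A, x ∉ S := by
    intro x hx
    rcases Finset.mem_insert.1 hx with rfl | hx
    · intro h; have := hSsub h; simp only [Finset.mem_Icc] at this; omega
    · exact (Finset.mem_sdiff.1 hx).2
  set eA : Fin a → ℕ := ⇑(A.orderEmbOfFin hAcard) with heA
  set eS : Fin (l + 1) → ℕ := ⇑(S.orderEmbOfFin hScard) with heS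
  have heAmem : ∀ k, eA k ∈ A := fun k => Finset.orderEmbOfFin_mem A hAcard k
  have heSmem : ∀ k, eS k ∈ S := fun k => Finset.orderEmbOfFin_mem S hScard k
  have hAband : ∀ k : Fin a, 2 ≤ eA k ∧ eA k ≤ K := by
    intro k
    have := hAsub (heAmem k)
    simpa [Finset.mem_Icc] using this
  have hSband : ∀ k : Fin (l + 1), 3 ≤ eS k ∧ eS k ≤ K := by
    intro k
    have := hSsub (heSmem k)
    simpa [Finset.mem_Icc] using this
  have heAmono : StrictMono eA := (A.orderEmbOfFin hAcard).strictMono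
  have heSmono : StrictMono eS := (S.orderEmbOfFin hScard).strictMono
  have heAinj : Function.Injective eA := (A.orderEmbOfFin hAcard).injective
  have heSinj : Function.Injective eS := (S.orderEmbOfFin hScard).injective
  have heA0 : eA ⟨0, ha0⟩ ≤ 2 := by
    rw [heA, Finset.orderEmbOfFin_zero hAcard ha0]
    exact Finset.min'_le _ _ h2A
  set N := μ.card + 1 with hN
  have hNi : ∀ i j : ℕ, (i, j) ∈ μ → i < N := by
    intro i j hij
    have h1 : (Finset.range (i + 1)).card ≤ μ.cells.card := by
      apply Finset.card_le_card_of_injOn (fun k => (k, j))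
      · intro k hk
        simp only [Finset.mem_coe, Finset.mem_range] at hk
        exact (YoungDiagram.mem_cells _).2 (μ.up_left_mem (by omega) le_rfl hij)
      · intro x _ y _ h
        simpa using congrArg Prod.fst h
    simp only [Finset.card_range] at h1
    have h2 : μ.cells.card = μ.card := rfl
    omega
  set v : ℕ × ℕ → ℕ := vfun K N eA eS ha0 with hv
  -- shape facts
  have hmrow : ∀ j, ((0 : ℕ), j) ∈ μ ↔ j ≤ a := by
    intro j; rw [YoungDiagram.mem_iff_lt_rowLen, hrow]; omega
  have hmcol : ∀ i, (i, (0 : ℕ)) ∈ μ ↔ i ≤ l := by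
    intro i; rw [YoungDiagram.mem_iff_lt_colLen, hcol]; omega
  -- monotonicity of v along rows
  have hrowmono : ∀ i j j', (i, j) ∈ μ → (i, j') ∈ μ → j < j' → v (i, j) < v (i, j') := by
    intro i j j' hp hq hjj
    rcases Nat.eq_zero_or_pos i with rfl | hi
    · have hj' : j' ≤ a := (hmrow j').1 hq
      rcases Nat.eq_zero_or_pos j with rfl | hj
      · rw [hv, vfun_00, vfun_arm (by omega) hj']
        have := hAband ⟨j' - 1, by omega⟩
        omega
      · rw [hv, vfun_arm hj (by omega), vfun_arm (by omega) hj']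
        exact heAmono (by simp only [Fin.mk_lt_mk]; omega)
    · rcases Nat.eq_zero_or_pos j with rfl | hj
      · have hi' : i ≤ l := (hmcol i).1 hp
        rw [hv, vfun_leg hi hi']
        by_cases hc : i = 1 ∧ j' = 1
        · obtain ⟨rfl, rfl⟩ := hc
          rw [vfun_11]
          exact heSmono (by simp only [Fin.lt_def, Fin.val_last]; omega)
        · rw [vfun_else (by omega) (by omega) hc]
          have := hSband ⟨i - 1, by omega⟩
          omega
      · by_cases hc : i = 1 ∧ j = 1
        · obtain ⟨rfl, rfl⟩ := hc
          rw [hv, vfun_11, vfun_else (by omega) (by omega) (by omega)]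
          have := hSband (Fin.last l)
          omega
        · rw [hv, vfun_else (by omega) (by omega) hc,
            vfun_else (by omega) (by omega) (by omega)]
          have h1 : N * j + N ≤ N * j' := by
            calc N * j + N = N * (j + 1) := by ring
            _ ≤ N * j' := Nat.mul_le_mul_left N (by omega)
          omega
  -- monotonicity of v along columns
  have hcolmono : ∀ i i' j, (i, j) ∈ μ → (i', j) ∈ μ → i < i' → v (i, j) < v (i', j) := by
    intro i i' j hp hq hii
    rcases Nat.eq_zero_or_pos j with rfl | hj
    · have hi' : i' ≤ l := (hmcol i').1 hq
      rcases Nat.eq_zero_or_pos i with rfl | hi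
      · rw [hv, vfun_00, vfun_leg (by omega) hi']
        exact lt_of_lt_of_le (by norm_num) (hSband _).1
      · rw [hv, vfun_leg hi (by omega), vfun_leg (by omega) hi']
        exact heSmono (by simp only [Fin.mk_lt_mk]; omega)
    · rcases Nat.eq_zero_or_pos i with rfl | hi
      · have hja : j ≤ a := (hmrow j).1 hp
        rw [hv, vfun_arm hj hja]
        by_cases hc : i' = 1 ∧ j = 1
        · obtain ⟨rfl, hj1⟩ := hc
          subst hj1
          rw [vfun_11]
          have h1 : eA ⟨1 - 1, by omega⟩ ≤ 2 := heA0
          have h2 := hSband (Fin.last l)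
          omega
        · rw [vfun_else (by omega) (by omega) hc]
          have := hAband ⟨j - 1, by omega⟩
          omega
      · by_cases hc : i = 1 ∧ j = 1
        · obtain ⟨rfl, rfl⟩ := hc
          rw [hv, vfun_11, vfun_else (by omega) (by omega) (by omega)]
          have := hSband (Fin.last l)
          omega
        · rw [hv, vfun_else (by omega) (by omega) hc,
            vfun_else (by omega) (by omega) (by omega)]
          omega
  -- category decomposition of cells
  have hcat : ∀ p : ℕ × ℕ, p ∈ μ →
      p = (0, 0) ∨ p = (1, 1) ∨ (p.1 = 0 ∧ 1 ≤ p.2 ∧ p.2 ≤ a) ∨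
        (p.2 = 0 ∧ 1 ≤ p.1 ∧ p.1 ≤ l) ∨ (1 ≤ p.1 ∧ 1 ≤ p.2 ∧ ¬(p.1 = 1 ∧ p.2 = 1)) := by
    rintro ⟨i, j⟩ hp
    rcases Nat.eq_zero_or_pos i with rfl | hi
    · rcases Nat.eq_zero_or_pos j with rfl | hj
      · left; rfl
      · right; right; left
        exact ⟨rfl, hj, (hmrow j).1 hp⟩
    · rcases Nat.eq_zero_or_pos j with rfl | hj
      · right; right; right; left
        exact ⟨rfl, hi, (hmcol i).1 hp⟩
      · by_cases hc : i = 1 ∧ j = 1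
        · right; left; simp [hc.1, hc.2]
        · right; right; right; right; exact ⟨hi, hj, hc⟩
  -- value bands
  have hband : ∀ p : ℕ × ℕ, p ∈ μ →
      (p = (0, 0) ∧ v p = 1) ∨
      ((p = (1, 1) ∨ (p.2 = 0 ∧ 1 ≤ p.1 ∧ p.1 ≤ l)) ∧ v p ∈ S) ∨
      ((p.1 = 0 ∧ 1 ≤ p.2 ∧ p.2 ≤ a) ∧ v p ∈ A) ∨
      ((1 ≤ p.1 ∧ 1 ≤ p.2 ∧ ¬(p.1 = 1 ∧ p.2 = 1)) ∧ v p = K + 1 + (N * p.2 + p.1)) := by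
    intro p hp
    rcases hcat p hp with rfl | rfl | h | h | h
    · exact Or.inl ⟨rfl, vfun_00⟩
    · refine Or.inr (Or.inl ⟨Or.inl rfl, ?_⟩)
      rw [hv, vfun_11]; exact heSmem _
    · obtain ⟨i, j⟩ := p
      obtain ⟨h0, h1, h2⟩ := h
      simp only at h0 h1 h2
      subst h0
      refine Or.inr (Or.inr (Or.inl ⟨⟨rfl, h1, h2⟩, ?_⟩))
      rw [hv, vfun_arm h1 h2]
      exact heAmem _
    · obtain ⟨i, j⟩ := p
      obtain ⟨h0, h1, h2⟩ := h
      simp only at h0 h1 h2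
      subst h0
      refine Or.inr (Or.inl ⟨Or.inr ⟨rfl, h1, h2⟩, ?_⟩)
      rw [hv, vfun_leg h1 h2]
      exact heSmem _
    · refine Or.inr (Or.inr (Or.inr ⟨h, ?_⟩))
      obtain ⟨i, j⟩ := p
      exact vfun_else h.1 h.2.1 h.2.2
  have hSband' : ∀ x ∈ S, 3 ≤ x ∧ x ≤ K := by
    intro x hx; have := hSsub hx; simpa [Finset.mem_Icc] using this
  have hAband' : ∀ x ∈ A, 2 ≤ x ∧ x ≤ K := by
    intro x hx; have := hAsub hx; simpa [Finset.mem_Icc] using this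
  -- injectivity of v on the cells
  have hinj : Set.InjOn v ↑μ.cells := by
    intro p hp q hq hvpq
    simp only [Finset.mem_coe, YoungDiagram.mem_cells] at hp hq
    rcases hband p hp with ⟨hc1, hb1⟩ | ⟨hc1, hb1⟩ | ⟨hc1, hb1⟩ | ⟨hc1, hb1⟩ <;>
      rcases hband q hq with ⟨hc2, hb2⟩ | ⟨hc2, hb2⟩ | ⟨hc2, hb2⟩ | ⟨hc2, hb2⟩
    · rw [hc1, hc2]
    · exfalso; have := hSband' _ hb2; omega
    · exfalso; have := hAband' _ hb2; omega
    · exfalso; omega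
    · exfalso; have := hSband' _ hb1; omega
    · -- both values in S
      rcases hc1 with rfl | ⟨h10, h11, h12⟩ <;> rcases hc2 with rfl | ⟨h20, h21, h22'⟩
      · rfl
      · exfalso
        obtain ⟨i, j⟩ := q
        simp only at h20 h21 h22'
        subst h20
        rw [hv, vfun_11, vfun_leg h21 h22'] at hvpq
        have h' : i - 1 = l := by simpa using congrArg Fin.val (heSinj hvpq.symm)
        omega
      · exfalso
        obtain ⟨i, j⟩ := p
        simp only at h10 h11 h12
        subst h10
        rw [hv, vfun_11, vfun_leg h11 h12] at hvpq
        have h' : i - 1 = l := by simpa using congrArg Fin.val (heSinj hvpq)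
        omega
      · obtain ⟨i, j⟩ := p
        obtain ⟨i', j'⟩ := q
        simp only at h10 h11 h12 h20 h21 h22'
        subst h10; subst h20
        rw [hv, vfun_leg h11 h12, vfun_leg h21 h22'] at hvpq
        have h' : i - 1 = i' - 1 := by simpa using congrArg Fin.val (heSinj hvpq)
        have h'' : i = i' := by omega
        subst h''
        rfl
    · exfalso; exact hAS _ hb2 (hvpq ▸ hb1)
    · exfalso; have := hSband' _ hb1; omega
    · exfalso; have := hAband' _ hb1; omega
    · exfalso; exact hAS _ hb1 (hvpq.symm ▸ hb2)
    · -- both values in A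
      obtain ⟨i, j⟩ := p
      obtain ⟨i', j'⟩ := q
      obtain ⟨h10, h11, h12⟩ := hc1
      obtain ⟨h20, h21, h22'⟩ := hc2
      simp only at h10 h11 h12 h20 h21 h22'
      subst h10; subst h20
      rw [hv, vfun_arm h11 h12, vfun_arm h21 h22'] at hvpq
      have h' : j - 1 = j' - 1 := by simpa using congrArg Fin.val (heAinj hvpq)
      have h'' : j = j' := by omega
      subst h''
      rfl
    · exfalso; have := hAband' _ hb1; omega
    · exfalso; omega
    · exfalso; have := hSband' _ hb2; omega
    · exfalso; have := hAband' _ hb2; omega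
    · -- both in the "rest" region
      have h1 := hNi p.1 p.2 (by rwa [Prod.mk.eta])
      have h2 := hNi q.1 q.2 (by rwa [Prod.mk.eta])
      rw [hb1, hb2] at hvpq
      have hj : p.2 = q.2 := by
        rcases lt_trichotomy p.2 q.2 with h | h | h
        · exfalso
          have : N * p.2 + N ≤ N * q.2 := by
            calc N * p.2 + N = N * (p.2 + 1) := by ring
            _ ≤ N * q.2 := Nat.mul_le_mul_left N (by omega)
          omega
        · exact h
        · exfalso
          have : N * q.2 + N ≤ N * p.2 := by
            calc N * q.2 + N = N * (q.2 + 1) := by ring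
            _ ≤ N * p.2 := Nat.mul_le_mul_left N (by omega)
          omega
      have hi : p.1 = q.1 := by rw [hj] at hvpq; omega
      exact Prod.ext hi hj
  classical
  -- the hook region
  set H : Finset (ℕ × ℕ) := μ.cells.filter (fun p => p.1 = 0 ∨ p.2 = 0 ∨ p = (1, 1)) with hH
  have hHsub : H ⊆ μ.cells := Finset.filter_subset _ _
  have hHband : ∀ p ∈ H, 1 ≤ v p ∧ v p ≤ K := by
    intro p hp
    rw [hH, Finset.mem_filter] at hp
    obtain ⟨hpc, hp2⟩ := hp
    have hpm : p ∈ μ := (YoungDiagram.mem_cells _).1 hpc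
    rcases hband p hpm with ⟨_, hb⟩ | ⟨_, hb⟩ | ⟨_, hb⟩ | ⟨hc, _⟩
    · omega
    · have := hSband' _ hb; omega
    · have := hAband' _ hb; omega
    · exfalso
      obtain ⟨h1, h2, h3⟩ := hc
      rcases hp2 with h | h | h
      · omega
      · omega
      · rw [h] at h1 h2 h3
        exact h3 ⟨rfl, rfl⟩
  have hvout : ∀ p ∈ μ.cells, p ∉ H → K < v p := by
    intro p hpc hpH
    have hpm : p ∈ μ := (YoungDiagram.mem_cells _).1 hpc
    have hcnd : ¬(p.1 = 0 ∨ p.2 = 0 ∨ p = (1, 1)) := by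
      intro h
      exact hpH (by rw [hH, Finset.mem_filter]; exact ⟨hpc, h⟩)
    push_neg at hcnd
    obtain ⟨hc1, hc2, hc3⟩ := hcnd
    obtain ⟨i, j⟩ := p
    simp only at hc1 hc2
    have hc3' : ¬(i = 1 ∧ j = 1) := by
      rintro ⟨rfl, rfl⟩; exact hc3 rfl
    rw [hv, vfun_else (by omega) (by omega) hc3']
    omega
  have hinjH : Set.InjOn v ↑H := hinj.mono (Finset.coe_subset.2 hHsub)
  have himgH : H.image v = Finset.Icc 1 K := by
    apply Finset.Subset.antisymm
    · intro t ht
      simp only [Finset.mem_image] at ht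
      obtain ⟨q, hq, rfl⟩ := ht
      simp only [Finset.mem_Icc]
      exact hHband q hq
    · intro t ht
      simp only [Finset.mem_Icc] at ht
      simp only [Finset.mem_image]
      by_cases h1 : t = 1
      · refine ⟨(0, 0), ?_, ?_⟩
        · rw [hH, Finset.mem_filter]
          exact ⟨(YoungDiagram.mem_cells _).2 (μ.up_left_mem (by omega) (by omega) h22),
            Or.inl rfl⟩
        · rw [hv, vfun_00, h1]
      · by_cases htS : t ∈ S
        · obtain ⟨k, hk⟩ : ∃ k, eS k = t := by
            have : t ∈ Set.range eS := by
              rw [heS, Finset.range_orderEmbOfFin]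
              exact_mod_cast htS
            exact this
          by_cases hkl : (k : ℕ) = l
          · refine ⟨(1, 1), ?_, ?_⟩
            · rw [hH, Finset.mem_filter]
              exact ⟨(YoungDiagram.mem_cells _).2 h22, Or.inr (Or.inr rfl)⟩
            · rw [hv, vfun_11, ← hk]
              congr 1
              exact Fin.ext (by simp [Fin.val_last, hkl])
          · have hkl' : (k : ℕ) + 1 ≤ l := by have := k.isLt; omega
            refine ⟨((k : ℕ) + 1, 0), ?_, ?_⟩
            · rw [hH, Finset.mem_filter]
              exact ⟨(YoungDiagram.mem_cells _).2 ((hmcol _).2 hkl'), Or.inr (Or.inl rfl)⟩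
            · rw [hv, vfun_leg (by omega) hkl', ← hk]
              congr 1
        · have htA : t ∈ A := by
            rcases eq_or_ne t 2 with rfl | h2
            · exact h2A
            · exact Finset.mem_insert_of_mem
                (Finset.mem_sdiff.2 ⟨Finset.mem_Icc.2 (by omega), htS⟩)
          obtain ⟨k, hk⟩ : ∃ k, eA k = t := by
            have : t ∈ Set.range eA := by
              rw [heA, Finset.range_orderEmbOfFin]
              exact_mod_cast htA
            exact this
          have hka : (k : ℕ) + 1 ≤ a := by have := k.isLt; omega
          refine ⟨(0, (k : ℕ) + 1), ?_, ?_⟩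
          · rw [hH, Finset.mem_filter]
            exact ⟨(YoungDiagram.mem_cells _).2 ((hmrow _).2 hka), Or.inl rfl⟩
          · rw [hv, vfun_arm (by omega) hka, ← hk]
            congr 1
  -- the rank function agrees with v on the hook
  have hFH : ∀ p ∈ H, rkv μ.cells v p = v p := by
    intro p hp
    have hvp := hHband p hp
    have hfe : μ.cells.filter (fun q => v q ≤ v p) = H.filter (fun q => v q ≤ v p) := by
      ext q
      simp only [Finset.mem_filter]
      constructor
      · rintro ⟨hq, hle⟩
        refine ⟨?_, hle⟩
        by_contra hqH
        have := hvout q hq hqH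
        omega
      · rintro ⟨hq, hle⟩
        exact ⟨hHsub hq, hle⟩
    rw [rkv, hfe]
    calc (H.filter (fun q => v q ≤ v p)).card
        = ((H.filter (fun q => v q ≤ v p)).image v).card :=
          (Finset.card_image_of_injOn
            (hinjH.mono (Finset.coe_subset.2 (Finset.filter_subset _ _)))).symm
      _ = ((H.image v).filter (fun t => t ≤ v p)).card := by rw [Finset.filter_image]
      _ = ((Finset.Icc 1 K).filter (fun t => t ≤ v p)).card := by rw [himgH]
      _ = (Finset.Icc 1 (v p)).card := by
          congr 1
          ext t
          simp only [Finset.mem_filter, Finset.mem_Icc]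
          omega
      _ = v p := by rw [Nat.card_Icc]; omega
  -- assemble the tableau
  refine ⟨fun p => if p ∈ μ then rkv μ.cells v p else 0, ⟨?_, ?_, ?_, ?_⟩, ?_⟩
  · have hb := rkv_bijOn μ.cells v hinj
    have hcc : μ.cells.card = μ.card := rfl
    rw [hcc] at hb
    exact hb.congr (fun p hp => (if_pos ((YoungDiagram.mem_cells _).1 hp)).symm)
  · intro p hp
    show (if p ∈ μ then rkv μ.cells v p else 0) = 0
    rw [if_neg hp]
  · intro p q hp hq he hlt
    show (if p ∈ μ then rkv μ.cells v p else 0) < (if q ∈ μ then rkv μ.cells v q else 0)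
    rw [if_pos hp, if_pos hq]
    obtain ⟨i, j⟩ := p
    obtain ⟨i', j'⟩ := q
    simp only at he hlt
    subst he
    exact rkv_lt _ _ ((YoungDiagram.mem_cells _).2 hq) (hrowmono i j j' hp hq hlt)
  · intro p q hp hq he hlt
    show (if p ∈ μ then rkv μ.cells v p else 0) < (if q ∈ μ then rkv μ.cells v q else 0)
    rw [if_pos hp, if_pos hq]
    obtain ⟨i, j⟩ := p
    obtain ⟨i', j'⟩ := q
    simp only at he hlt
    subst he
    exact rkv_lt _ _ ((YoungDiagram.mem_cells _).2 hq) (hcolmono i i' j hp hq hlt)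
  · -- the leg together with the corner carries exactly the values of S
    have hTH : ∀ p ∈ ((Finset.Icc 1 l).image (fun i => (i, (0 : ℕ)))) ∪ {((1 : ℕ), (1 : ℕ))},
        p ∈ H := by
      intro p hp
      rw [hH, Finset.mem_filter]
      rcases Finset.mem_union.1 hp with h | h
      · obtain ⟨i, hi, rfl⟩ := Finset.mem_image.1 h
        simp only [Finset.mem_Icc] at hi
        exact ⟨(YoungDiagram.mem_cells _).2 ((hmcol i).2 hi.2), Or.inr (Or.inl rfl)⟩
      · rw [Finset.mem_singleton.1 h]
        exact ⟨(YoungDiagram.mem_cells _).2 h22, Or.inr (Or.inr rfl)⟩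
    have hfv : ∀ p ∈ ((Finset.Icc 1 l).image (fun i => (i, (0 : ℕ)))) ∪ {((1 : ℕ), (1 : ℕ))},
        (if p ∈ μ then rkv μ.cells v p else 0) = v p := by
      intro p hp
      have h1 := hTH p hp
      rw [if_pos ((YoungDiagram.mem_cells _).1 (hHsub h1)), hFH p h1]
    rw [Finset.image_congr hfv]
    have hsub : (((Finset.Icc 1 l).image (fun i => (i, (0 : ℕ)))) ∪
        {((1 : ℕ), (1 : ℕ))}).image v ⊆ S := by
      intro t ht
      obtain ⟨p, hp, rfl⟩ := Finset.mem_image.1 ht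
      rcases Finset.mem_union.1 hp with h | h
      · obtain ⟨i, hi, rfl⟩ := Finset.mem_image.1 h
        simp only [Finset.mem_Icc] at hi
        rw [hv, vfun_leg hi.1 hi.2]
        exact heSmem _
      · rw [Finset.mem_singleton.1 h, hv, vfun_11]
        exact heSmem _
    apply Finset.eq_of_subset_of_card_le hsub
    have hdisj : Disjoint ((Finset.Icc 1 l).image (fun i => (i, (0 : ℕ))))
        {((1 : ℕ), (1 : ℕ))} := by
      rw [Finset.disjoint_singleton_right]
      intro h
      obtain ⟨i, _, h2⟩ := Finset.mem_image.1 h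
      exact absurd (congrArg Prod.snd h2) (by simp)
    have hTcard : (((Finset.Icc 1 l).image (fun i => (i, (0 : ℕ)))) ∪
        {((1 : ℕ), (1 : ℕ))}).card = l + 1 := by
      rw [Finset.card_union_of_disjoint hdisj, Finset.card_singleton,
        Finset.card_image_of_injective _ (fun x y h => by simpa using congrArg Prod.fst h),
        Nat.card_Icc]
      omega
    have hTsub : ↑(((Finset.Icc 1 l).image (fun i => (i, (0 : ℕ)))) ∪
        {((1 : ℕ), (1 : ℕ))}) ⊆ (↑μ.cells : Set (ℕ × ℕ)) := by
      intro p hp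
      simp only [Finset.mem_coe] at hp ⊢
      exact hHsub (hTH p hp)
    rw [Finset.card_image_of_injOn (hinj.mono hTsub), hTcard, hScard]


/-- Let `λ` be a partition of `n ≥ 2` containing the box `(2,2)` (0-indexed `(1,1)`), with
arm length `a` (first row minus the corner) and leg length `l` (first column minus the
corner), `a ≥ l ≥ 2`. Then the number of standard Young tableaux of shape `λ` is at least
`C(a+l, l+1)`. -/
theorem stmt19 (μ : YoungDiagram) (n : ℕ) (hn : 2 ≤ n) (hcard : μ.card = n)
    (h22 : (1, 1) ∈ μ) (a l : ℕ)
    (ha : a = μ.rowLen 0 - 1) (hl : l = μ.colLen 0 - 1)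
    (hla : l ≤ a) (hl2 : 2 ≤ l) :
    (a + l).choose (l + 1) ≤ sytCount μ := by
  classical
  have h01 : ((0 : ℕ), (1 : ℕ)) ∈ μ := μ.up_left_mem (by omega) le_rfl h22
  have h10 : ((1 : ℕ), (0 : ℕ)) ∈ μ := μ.up_left_mem le_rfl (by omega) h22
  have hrow : μ.rowLen 0 = a + 1 := by
    have h1 : 1 < μ.rowLen 0 := YoungDiagram.mem_iff_lt_rowLen.1 h01
    omega
  have hcol : μ.colLen 0 = l + 1 := by
    have h1 : 1 < μ.colLen 0 := YoungDiagram.mem_iff_lt_colLen.1 h10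
    omega
  have hfin : Finite {f : ℕ × ℕ → ℕ // IsSYT μ f} := by
    let G : {f : ℕ × ℕ → ℕ // IsSYT μ f} → ({x // x ∈ μ.cells} → Fin (μ.card + 1)) :=
      fun fh p => ⟨fh.1 p.1, by
        have := fh.2.1.mapsTo (by exact_mod_cast p.2 : (p : ℕ × ℕ) ∈ (↑μ.cells : Set (ℕ × ℕ)))
        simp only [Set.mem_Icc] at this
        omega⟩
    apply Finite.of_injective G
    intro f g h
    apply Subtype.ext
    funext p
    by_cases hp : p ∈ μ
    · have h2 := congrFun h ⟨p, (YoungDiagram.mem_cells _).2 hp⟩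
      simpa [G, Fin.mk.injEq] using h2
    · rw [f.2.2.1 p hp, g.2.2.1 p hp]
  have key := key_syt μ a l hl2 hla hrow hcol h22
  set T := (Finset.Icc 3 (a + l + 2)).powersetCard (l + 1) with hT
  let Φ : {S // S ∈ T} → {f : ℕ × ℕ → ℕ // IsSYT μ f} := fun Sh =>
    ⟨(key Sh.1 (Finset.mem_powersetCard.1 Sh.2).1 (Finset.mem_powersetCard.1 Sh.2).2).choose,
     (key Sh.1 (Finset.mem_powersetCard.1 Sh.2).1 (Finset.mem_powersetCard.1 Sh.2).2).choose_spec.1⟩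
  have hΦ : Function.Injective Φ := by
    intro S1 S2 h
    have h1 := (key S1.1 (Finset.mem_powersetCard.1 S1.2).1
      (Finset.mem_powersetCard.1 S1.2).2).choose_spec.2
    have h2 := (key S2.1 (Finset.mem_powersetCard.1 S2.2).1
      (Finset.mem_powersetCard.1 S2.2).2).choose_spec.2
    apply Subtype.ext
    rw [← h1, ← h2]
    have hval : (Φ S1).1 = (Φ S2).1 := congrArg Subtype.val h
    simp only [Φ] at hval
    rw [hval]
  calc (a + l).choose (l + 1) = T.card := by
        rw [hT, Finset.card_powersetCard, Nat.card_Icc]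
        congr 1
    _ = Nat.card {S // S ∈ T} := (Nat.card_eq_finsetCard T).symm
    _ ≤ Nat.card {f : ℕ × ℕ → ℕ // IsSYT μ f} := Nat.card_le_card_of_injective Φ hΦ
    _ = sytCount μ := rfl
end
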